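/- arXiv:2012.08784 — 3 statements merged into one kernel-verified Lean document; each statement's English description precedes it below -/
import Mathlib

section
/- Let Z ∈ ℂ^{n1×n2×n3} admit a skinny transformed tensor SVD Z = U ⋄ S ⋄ Vᴴ with transformed multi-rank (r_1,…,r_{n3}), suppose Z satisfies the tensor incoherence conditions with parameter μ ≥ 1, and let T be the subspace determined by U and V. Then for every i ∈ [n1], j ∈ [n2], k ∈ [n3], the orthogonal projection of the unit tensor satisfies ‖P_T(E_ijk)‖_F² ≤ 2μ(Σ_{t=1}^{n3} r_t)/(n_(2) n_3). -/
open scoped BigOperators ComplexConjugate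
open MeasureTheory Matrix

noncomputable section

/-- A third-order complex tensor. -/
abbrev Tensor (n1 n2 n3 : ℕ) : Type := Fin n1 → Fin n2 → Fin n3 → ℂ

namespace Tensor

variable {n1 n2 n3 n4 r : ℕ}

/-- The `t`-th frontal slice of the transformed tensor `Φ[A]`. -/
def slice (Φ : Matrix (Fin n3) (Fin n3) ℂ) (A : Tensor n1 n2 n3) (t : Fin n3) :
    Matrix (Fin n1) (Fin n2) ℂ :=
  Matrix.of fun i j => ∑ k, Φ t k * A i j k

/-- Reconstruct a tensor from its transformed frontal slices (inverse transform `Φᴴ[·]`). -/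
def unslice (Φ : Matrix (Fin n3) (Fin n3) ℂ)
    (M : Fin n3 → Matrix (Fin n1) (Fin n2) ℂ) : Tensor n1 n2 n3 :=
  fun i j k => ∑ t, (starRingEnd ℂ) (Φ t k) * M t i j

/-- The Φ-product `A ⋄ B`. -/
def tprod (Φ : Matrix (Fin n3) (Fin n3) ℂ) (A : Tensor n1 n2 n3) (B : Tensor n2 n4 n3) :
    Tensor n1 n4 n3 :=
  unslice Φ fun t => slice Φ A t * slice Φ B t

/-- The conjugate transpose `Aᴴ` with respect to `Φ`. -/
def tconj (Φ : Matrix (Fin n3) (Fin n3) ℂ) (A : Tensor n1 n2 n3) : Tensor n2 n1 n3 :=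
  unslice Φ fun t => (slice Φ A t)ᴴ

/-- Frobenius norm of a tensor. -/
def frob (A : Tensor n1 n2 n3) : ℝ :=
  Real.sqrt (∑ i, ∑ j, ∑ k, Complex.normSq (A i j k))

/-- Entrywise inner product `⟨A, B⟩ = Σ conj(A) B`. -/
def tinner (A B : Tensor n1 n2 n3) : ℂ :=
  ∑ i, ∑ j, ∑ k, (starRingEnd ℂ) (A i j k) * B i j k

/-- `‖A‖_∞`, the max modulus of the entries. -/
def inftyNorm (A : Tensor n1 n2 n3) : ℝ :=
  ⨆ i, ⨆ j, ⨆ k, ‖A i j k‖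

/-- `‖A‖_{∞,2}`. -/
def infty2Norm (A : Tensor n1 n2 n3) : ℝ :=
  max (⨆ i : Fin n1, Real.sqrt (∑ b, ∑ k, Complex.normSq (A i b k)))
      (⨆ j : Fin n2, Real.sqrt (∑ a, ∑ k, Complex.normSq (A a j k)))

/-- The weighted norm `‖A‖_{∞,w}` for a weight vector `w`. -/
def inftyWNorm (w : Fin n3 → ℝ) (A : Tensor n1 n2 n3) : ℝ :=
  max (⨆ i : Fin n1, Real.sqrt (∑ b, ∑ k, (w k) ^ 2 * Complex.normSq (A i b k)))
      (⨆ j : Fin n2, Real.sqrt (∑ a, ∑ k, (w k) ^ 2 * Complex.normSq (A a j k)))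

/-- Spectral norm of a complex matrix (ℓ²→ℓ² operator norm). -/
def specNormM {m n : ℕ} (M : Matrix (Fin m) (Fin n) ℂ) : ℝ :=
  ‖LinearMap.toContinuousLinearMap (Matrix.toEuclideanLin M)‖

/-- Nuclear norm of a complex matrix: the sum of its singular values. -/
def nuclearNormM {m n : ℕ} (M : Matrix (Fin m) (Fin n) ℂ) : ℝ :=
  ∑ i, Real.sqrt ((Matrix.isHermitian_conjTranspose_mul_self M).eigenvalues i)

/-- Tensor spectral norm: max of spectral norms of transformed frontal slices. -/
def specNorm (Φ : Matrix (Fin n3) (Fin n3) ℂ) (A : Tensor n1 n2 n3) : ℝ :=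
  ⨆ t, specNormM (slice Φ A t)

/-- Transformed tensor nuclear norm. -/
def ttnn (Φ : Matrix (Fin n3) (Fin n3) ℂ) (A : Tensor n1 n2 n3) : ℝ :=
  ∑ t, nuclearNormM (slice Φ A t)

/-- The sampling projection `P_Ω`. -/
def projOmega (Ω : Set (Fin n1 × Fin n2 × Fin n3)) (A : Tensor n1 n2 n3) :
    Tensor n1 n2 n3 :=
  fun i j k => Ω.indicator (fun p => A p.1 p.2.1 p.2.2) (i, j, k)

/-- The column-basis tensor `e_ik ∈ ℂ^{n×1×n3}`. -/
def colBasis {n n3 : ℕ} (i : Fin n) (k : Fin n3) : Tensor n 1 n3 :=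
  fun a _ c => if a = i ∧ c = k then 1 else 0

/-- The unit tensor `E_ijk`. -/
def unitTensor (i : Fin n1) (j : Fin n2) (k : Fin n3) : Tensor n1 n2 n3 :=
  fun a b c => if a = i ∧ b = j ∧ c = k then 1 else 0

/-- The orthogonal projection `P_T` onto the subspace `T` determined by `U, V`. -/
def projT (Φ : Matrix (Fin n3) (Fin n3) ℂ) (U : Tensor n1 r n3) (V : Tensor n2 r n3)
    (X : Tensor n1 n2 n3) : Tensor n1 n2 n3 :=
  tprod Φ (tprod Φ U (tconj Φ U)) X + tprod Φ X (tprod Φ V (tconj Φ V))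
    - tprod Φ (tprod Φ (tprod Φ U (tconj Φ U)) X) (tprod Φ V (tconj Φ V))

/-- `P_{T⊥}(X) = X - P_T(X)`. -/
def projTperp (Φ : Matrix (Fin n3) (Fin n3) ℂ) (U : Tensor n1 r n3) (V : Tensor n2 r n3)
    (X : Tensor n1 n2 n3) : Tensor n1 n2 n3 :=
  X - projT Φ U V X

/-- Operator norm of a map on tensors, w.r.t. the Frobenius norm. -/
def opNorm (L : Tensor n1 n2 n3 → Tensor n1 n2 n3) : ℝ :=
  sSup ((fun X => frob (L X)) '' {X | frob X ≤ 1})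

/-- A skinny transformed tensor SVD `Z = U ⋄ S ⋄ Vᴴ`. -/
structure SkinnySVD (Φ : Matrix (Fin n3) (Fin n3) ℂ) (Z : Tensor n1 n2 n3) (r : ℕ)
    (U : Tensor n1 r n3) (S : Tensor r r n3) (V : Tensor n2 r n3) : Prop where
  factor : Z = tprod Φ (tprod Φ U S) (tconj Φ V)
  U_orth : ∀ t, (slice Φ U t)ᴴ * slice Φ U t = 1
  V_orth : ∀ t, (slice Φ V t)ᴴ * slice Φ V t = 1
  S_offdiag : ∀ t i j, i ≠ j → slice Φ S t i j = 0
  S_diag_real_nonneg : ∀ t i, (slice Φ S t i i).im = 0 ∧ 0 ≤ (slice Φ S t i i).re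

/-- The tensor incoherence conditions with parameter μ. -/
def Incoherent (Φ : Matrix (Fin n3) (Fin n3) ℂ) (Z : Tensor n1 n2 n3)
    (U : Tensor n1 r n3) (V : Tensor n2 r n3) (μ : ℝ) : Prop :=
  (∀ (i : Fin n1) (k : Fin n3),
      (frob (tprod Φ (tconj Φ U) (colBasis i k))) ^ 2
        ≤ μ * (∑ t, ((slice Φ Z t).rank : ℝ)) / (n1 * n3)) ∧
  (∀ (j : Fin n2) (k : Fin n3),
      (frob (tprod Φ (tconj Φ V) (colBasis j k))) ^ 2
        ≤ μ * (∑ t, ((slice Φ Z t).rank : ℝ)) / (n2 * n3))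

/-- Bernoulli measure on `Bool` with success probability ρ. -/
def berMeasure (ρ : ℝ) : Measure Bool :=
  ρ.toNNReal • Measure.dirac true + (1 - ρ).toNNReal • Measure.dirac false

instance (ρ : ℝ) : IsFiniteMeasure (berMeasure ρ) := by
  unfold berMeasure; infer_instance

/-- The i.i.d. Bernoulli sampling model `Ω ~ Ber(ρ)`. -/
def berPi (n1 n2 n3 : ℕ) (ρ : ℝ) : Measure ((Fin n1 × Fin n2 × Fin n3) → Bool) :=
  Measure.pi fun _ => berMeasure ρ

/-- The random set `Ω` determined by a Bernoulli sample. -/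
def omegaSet {n1 n2 n3 : ℕ} (ω : (Fin n1 × Fin n2 × Fin n3) → Bool) :
    Set (Fin n1 × Fin n2 × Fin n3) := {p | ω p = true}

end Tensor

open Tensor



section MyHelpers
open scoped ComplexConjugate
open Matrix Tensor

variable {n1 n2 n3 n4 r : ℕ} {Φ : Matrix (Fin n3) (Fin n3) ℂ}

lemma my_slice_unslice (hΦ : Φ * Φᴴ = 1) (M : Fin n3 → Matrix (Fin n1) (Fin n2) ℂ)
    (t : Fin n3) : slice Φ (unslice Φ M) t = M t := by
  ext i j
  have h : ∀ s, (∑ c, Φ t c * conj (Φ s c)) = if t = s then 1 else 0 := by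
    intro s
    have := congrFun (congrFun hΦ t) s
    simpa [Matrix.mul_apply, Matrix.one_apply, Matrix.conjTranspose_apply] using this
  show (∑ c, Φ t c * ∑ s, conj (Φ s c) * M s i j) = M t i j
  calc (∑ c, Φ t c * ∑ s, conj (Φ s c) * M s i j)
      = ∑ s, (∑ c, Φ t c * conj (Φ s c)) * M s i j := by
        simp only [Finset.mul_sum, Finset.sum_mul]
        rw [Finset.sum_comm]
        simp only [mul_assoc]
    _ = M t i j := by simp [h]

lemma my_slice_tprod (hΦ : Φ * Φᴴ = 1) (A : Tensor n1 n2 n3) (B : Tensor n2 n4 n3)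
    (t : Fin n3) : slice Φ (tprod Φ A B) t = slice Φ A t * slice Φ B t :=
  my_slice_unslice hΦ _ t

lemma my_slice_tconj (hΦ : Φ * Φᴴ = 1) (A : Tensor n1 n2 n3) (t : Fin n3) :
    slice Φ (tconj Φ A) t = (slice Φ A t)ᴴ :=
  my_slice_unslice hΦ _ t

lemma my_slice_add (A B : Tensor n1 n2 n3) (t : Fin n3) :
    slice Φ (A + B) t = slice Φ A t + slice Φ B t := by
  ext i j
  show (∑ c, Φ t c * (A i j c + B i j c)) = _
  simp [mul_add, Finset.sum_add_distrib]
  rfl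

lemma my_slice_sub (A B : Tensor n1 n2 n3) (t : Fin n3) :
    slice Φ (A - B) t = slice Φ A t - slice Φ B t := by
  ext i j
  show (∑ c, Φ t c * (A i j c - B i j c)) = _
  simp [mul_sub, Finset.sum_sub_distrib]
  rfl

lemma my_parseval_vec (hΦ : Φᴴ * Φ = 1) (v : Fin n3 → ℂ) :
    ∑ t, Complex.normSq (∑ c, Φ t c * v c) = ∑ c, Complex.normSq (v c) := by
  have key : star (Φ.mulVec v) ⬝ᵥ (Φ.mulVec v) = star v ⬝ᵥ v := by
    calc star (Φ.mulVec v) ⬝ᵥ Φ.mulVec v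
        = Matrix.vecMul (star v) Φᴴ ⬝ᵥ Φ.mulVec v := by rw [Matrix.star_mulVec]
      _ = Matrix.vecMul (star v) (Φᴴ * Φ) ⬝ᵥ v := by
          rw [Matrix.dotProduct_mulVec, Matrix.vecMul_vecMul]
      _ = star v ⬝ᵥ v := by rw [hΦ, Matrix.vecMul_one]
  have h1 : ((∑ t, Complex.normSq (Φ.mulVec v t) : ℝ) : ℂ) = star (Φ.mulVec v) ⬝ᵥ Φ.mulVec v := by
    push_cast
    simp [dotProduct, Complex.normSq_eq_conj_mul_self, Complex.star_def]
  have h2 : ((∑ c, Complex.normSq (v c) : ℝ) : ℂ) = star v ⬝ᵥ v := by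
    push_cast
    simp [dotProduct, Complex.normSq_eq_conj_mul_self, Complex.star_def]
  have := Complex.ofReal_inj.mp (h1.trans (key.trans h2.symm))
  simpa [Matrix.mulVec, dotProduct] using this

lemma my_parseval (hΦ : Φᴴ * Φ = 1) (A : Tensor n1 n2 n3) :
    ∑ t, ∑ i, ∑ j, Complex.normSq (slice Φ A t i j)
      = ∑ i, ∑ j, ∑ c, Complex.normSq (A i j c) := by
  rw [Finset.sum_comm]
  refine Finset.sum_congr rfl fun i _ => ?_
  rw [Finset.sum_comm]
  refine Finset.sum_congr rfl fun j _ => ?_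
  exact my_parseval_vec hΦ fun c => A i j c

lemma my_frob_sq_slices (hΦ : Φᴴ * Φ = 1) (A : Tensor n1 n2 n3) :
    frob A ^ 2 = ∑ t, ∑ i, ∑ j, Complex.normSq (slice Φ A t i j) := by
  have h0 : (0:ℝ) ≤ ∑ i, ∑ j, ∑ c, Complex.normSq (A i j c) := by
    refine Finset.sum_nonneg fun _ _ => Finset.sum_nonneg fun _ _ =>
      Finset.sum_nonneg fun _ _ => Complex.normSq_nonneg _
  rw [my_parseval hΦ]
  exact Real.sq_sqrt h0

lemma my_combine {α β : Type*} [Fintype α] [Fintype β] (c : ℂ)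
    (F1 F2 F3 F4 : α → ℂ) (G1 G2 G3 G4 : β → ℂ) :
    ∑ a, ∑ b, c * (F1 a * G1 b + F2 a * G2 b + F3 a * G3 b + F4 a * G4 b)
      = c * ((∑ a, F1 a) * (∑ b, G1 b) + (∑ a, F2 a) * (∑ b, G2 b)
          + (∑ a, F3 a) * (∑ b, G3 b) + (∑ a, F4 a) * (∑ b, G4 b)) := by
  have one : ∀ (F : α → ℂ) (G : β → ℂ),
      c * ((∑ a, F a) * (∑ b, G b)) = ∑ a, ∑ b, c * (F a * G b) := by
    intro F G
    rw [Finset.sum_mul_sum, Finset.mul_sum]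
    exact Finset.sum_congr rfl fun a _ => by rw [Finset.mul_sum]
  simp only [mul_add, Finset.sum_add_distrib, one]

lemma my_key {n1 n2 r : ℕ} (Ut : Matrix (Fin n1) (Fin r) ℂ) (Vt : Matrix (Fin n2) (Fin r) ℂ)
    (hU : Utᴴ * Ut = 1) (hV : Vtᴴ * Vt = 1) (i : Fin n1) (j : Fin n2) (φ : ℂ) :
    ∑ a, ∑ b, Complex.normSq ((if b = j then (Ut * Utᴴ) a i * φ else 0)
        + (if a = i then φ * (Vt * Vtᴴ) j b else 0) - (Ut * Utᴴ) a i * φ * (Vt * Vtᴴ) j b)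
      ≤ Complex.normSq φ * ((∑ a, Complex.normSq (Ut i a)) + (∑ b, Complex.normSq (Vt j b))) := by
  set Q := Ut * Utᴴ with hQdef
  set R := Vt * Vtᴴ with hRdef
  set qq : ℝ := ∑ a, Complex.normSq (Ut i a) with hqq
  set rr : ℝ := ∑ b, Complex.normSq (Vt j b) with hrr
  have hqq0 : 0 ≤ qq := Finset.sum_nonneg fun _ _ => Complex.normSq_nonneg _
  have hrr0 : 0 ≤ rr := Finset.sum_nonneg fun _ _ => Complex.normSq_nonneg _
  have hQ2 : Q * Q = Q := by
    rw [hQdef, Matrix.mul_assoc, ← Matrix.mul_assoc Utᴴ, hU, Matrix.one_mul]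
  have hR2 : R * R = R := by
    rw [hRdef, Matrix.mul_assoc, ← Matrix.mul_assoc Vtᴴ, hV, Matrix.one_mul]
  have hQH : Qᴴ = Q := by rw [hQdef, conjTranspose_mul, conjTranspose_conjTranspose]
  have hRH : Rᴴ = R := by rw [hRdef, conjTranspose_mul, conjTranspose_conjTranspose]
  have hQii : Q i i = (qq : ℂ) := by
    rw [hQdef, Matrix.mul_apply, hqq]
    push_cast
    refine Finset.sum_congr rfl fun a _ => ?_
    simp [Matrix.conjTranspose_apply, Complex.star_def, Complex.mul_conj]
  have hRjj : R j j = (rr : ℂ) := by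
    rw [hRdef, Matrix.mul_apply, hrr]
    push_cast
    refine Finset.sum_congr rfl fun b _ => ?_
    simp [Matrix.conjTranspose_apply, Complex.star_def, Complex.mul_conj]
  have hconjQ : ∀ a, conj (Q a i) = Q i a := by
    intro a
    calc conj (Q a i) = Qᴴ i a := by
          simp [Matrix.conjTranspose_apply, Complex.star_def]
      _ = Q i a := by rw [hQH]
  have hconjR : ∀ b, conj (R j b) = R b j := by
    intro b
    calc conj (R j b) = Rᴴ b j := by
          simp [Matrix.conjTranspose_apply, Complex.star_def]
      _ = R b j := by rw [hRH]
  have hsumq : ∑ a, conj (Q a i) * Q a i = (qq : ℂ) := by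
    calc ∑ a, conj (Q a i) * Q a i = ∑ a, Q i a * Q a i := by
          refine Finset.sum_congr rfl fun a _ => ?_; rw [hconjQ]
      _ = (Q * Q) i i := (Matrix.mul_apply).symm
      _ = (qq : ℂ) := by rw [hQ2, hQii]
  have hsumr : ∑ b, conj (R j b) * R j b = (rr : ℂ) := by
    calc ∑ b, conj (R j b) * R j b = ∑ b, R j b * R b j := by
          refine Finset.sum_congr rfl fun b _ => ?_; rw [hconjR, mul_comm]
      _ = (R * R) j j := (Matrix.mul_apply).symm
      _ = (rr : ℂ) := by rw [hR2, hRjj]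
  set x : Fin n1 → Fin n2 → ℂ := fun a b =>
    (if b = j then Q a i * φ else 0) + (if a = i then φ * R j b else 0) - Q a i * φ * R j b with hx
  set d : Fin n2 → ℂ := fun b => if b = j then 1 else 0 with hd
  set e : Fin n1 → ℂ := fun a => if a = i then 1 else 0 with he
  have hxy : ∀ a b, x a b = φ * (Q a i * d b + e a * R j b - Q a i * R j b) := by
    intro a b
    simp only [hx, hd, he]
    by_cases h1 : b = j <;> by_cases h2 : a = i <;> simp [h1, h2] <;> ring
  have expand : ∀ a b, conj (x a b) * x a b = (conj φ * φ) * (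
      (conj (Q a i) * Q a i) * (conj (d b) * d b)
    + (conj (Q a i) * (e a - Q a i)) * (conj (d b) * R j b)
    + (conj (e a - Q a i) * Q a i) * (conj (R j b) * d b)
    + (conj (e a - Q a i) * (e a - Q a i)) * (conj (R j b) * R j b)) := by
    intro a b
    rw [hxy]
    simp only [_root_.map_mul, _root_.map_add, _root_.map_sub]
    ring
  have hB1 : ∑ b, conj (d b) * d b = 1 := by
    simp [hd, apply_ite conj, Finset.sum_ite_eq']
  have hA2 : ∑ a, conj (Q a i) * (e a - Q a i) = 0 := by
    have h1 : ∑ a, conj (Q a i) * e a = (qq : ℂ) := by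
      simp only [he, mul_ite, mul_one, mul_zero]
      rw [Finset.sum_ite_eq' Finset.univ i fun a => conj (Q a i)]
      simp [hconjQ i, hQii]
    calc ∑ a, conj (Q a i) * (e a - Q a i)
        = (∑ a, conj (Q a i) * e a) - ∑ a, conj (Q a i) * Q a i := by
          rw [← Finset.sum_sub_distrib]
          exact Finset.sum_congr rfl fun a _ => by ring
      _ = 0 := by rw [h1, hsumq, sub_self]
  have hesum : ∑ a, conj (e a) * Q a i = (qq : ℂ) := by
    simp only [he, apply_ite conj, _root_.map_one, _root_.map_zero, ite_mul, one_mul, zero_mul]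
    rw [Finset.sum_ite_eq' Finset.univ i fun a => Q a i]
    simp [hQii]
  have hA3 : ∑ a, conj (e a - Q a i) * Q a i = 0 := by
    calc ∑ a, conj (e a - Q a i) * Q a i
        = (∑ a, conj (e a) * Q a i) - ∑ a, conj (Q a i) * Q a i := by
          rw [← Finset.sum_sub_distrib]
          exact Finset.sum_congr rfl fun a _ => by rw [_root_.map_sub]; ring
      _ = 0 := by rw [hesum, hsumq, sub_self]
  have hA4 : ∑ a, conj (e a - Q a i) * (e a - Q a i) = 1 - (qq : ℂ) := by
    have h0 : ∑ a, conj (e a) * e a = 1 := by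
      simp [he, apply_ite conj, Finset.sum_ite_eq']
    have h2 : ∑ a, conj (Q a i) * e a = (qq : ℂ) := by
      simp only [he, mul_ite, mul_one, mul_zero]
      rw [Finset.sum_ite_eq' Finset.univ i fun a => conj (Q a i)]
      simp [hconjQ i, hQii]
    calc ∑ a, conj (e a - Q a i) * (e a - Q a i)
        = (∑ a, conj (e a) * e a) - (∑ a, conj (e a) * Q a i)
          - (∑ a, conj (Q a i) * e a) + ∑ a, conj (Q a i) * Q a i := by
          simp only [← Finset.sum_sub_distrib, ← Finset.sum_add_distrib]
          exact Finset.sum_congr rfl fun a _ => by rw [_root_.map_sub]; ring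
      _ = 1 - (qq : ℂ) := by rw [h0, hesum, h2, hsumq]; ring
  have total : ∑ a, ∑ b, conj (x a b) * x a b
      = (conj φ * φ) * ((qq : ℂ) + (1 - (qq : ℂ)) * (rr : ℂ)) := by
    calc ∑ a, ∑ b, conj (x a b) * x a b
        = ∑ a, ∑ b, (conj φ * φ) * (
            (conj (Q a i) * Q a i) * (conj (d b) * d b)
          + (conj (Q a i) * (e a - Q a i)) * (conj (d b) * R j b)
          + (conj (e a - Q a i) * Q a i) * (conj (R j b) * d b)
          + (conj (e a - Q a i) * (e a - Q a i)) * (conj (R j b) * R j b)) :=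
          Finset.sum_congr rfl fun a _ => Finset.sum_congr rfl fun b _ => expand a b
      _ = (conj φ * φ) * (
            (∑ a, conj (Q a i) * Q a i) * (∑ b, conj (d b) * d b)
          + (∑ a, conj (Q a i) * (e a - Q a i)) * (∑ b, conj (d b) * R j b)
          + (∑ a, conj (e a - Q a i) * Q a i) * (∑ b, conj (R j b) * d b)
          + (∑ a, conj (e a - Q a i) * (e a - Q a i)) * (∑ b, conj (R j b) * R j b)) :=
          my_combine _ _ _ _ _ _ _ _ _
      _ = (conj φ * φ) * ((qq : ℂ) + (1 - (qq : ℂ)) * (rr : ℂ)) := by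
          rw [hsumq, hB1, hA2, hA3, hA4, hsumr]; ring
  have heq : ∑ a, ∑ b, Complex.normSq (x a b) = Complex.normSq φ * (qq + (1 - qq) * rr) := by
    have hcast : ((∑ a, ∑ b, Complex.normSq (x a b) : ℝ) : ℂ)
        = ((Complex.normSq φ * (qq + (1 - qq) * rr) : ℝ) : ℂ) := by
      push_cast
      calc (∑ a, ∑ b, ((Complex.normSq (x a b) : ℂ)))
          = ∑ a, ∑ b, conj (x a b) * x a b := by
            exact Finset.sum_congr rfl fun a _ => Finset.sum_congr rfl fun b _ =>
              Complex.normSq_eq_conj_mul_self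
        _ = (conj φ * φ) * ((qq : ℂ) + (1 - (qq : ℂ)) * (rr : ℂ)) := total
        _ = (Complex.normSq φ : ℂ) * ((qq : ℂ) + (1 - (qq : ℂ)) * (rr : ℂ)) := by
            rw [← Complex.normSq_eq_conj_mul_self]
    exact_mod_cast hcast
  show ∑ a, ∑ b, Complex.normSq (x a b) ≤ _
  rw [heq]
  nlinarith [mul_nonneg (mul_nonneg (Complex.normSq_nonneg φ) hqq0) hrr0,
    Complex.normSq_nonneg φ, hqq0, hrr0]


end MyHelpers

/-- bound on the projection of the unit tensor onto T. -/
theorem statement1 {n1 n2 n3 r : ℕ} (Φ : Matrix (Fin n3) (Fin n3) ℂ)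
    (hΦ : Φ ∈ Matrix.unitaryGroup (Fin n3) ℂ)
    (Z : Tensor n1 n2 n3) (U : Tensor n1 r n3) (S : Tensor r r n3) (V : Tensor n2 r n3)
    (hSVD : SkinnySVD Φ Z r U S V)
    (μ : ℝ) (hμ : 1 ≤ μ) (hinc : Incoherent Φ Z U V μ) :
    ∀ (i : Fin n1) (j : Fin n2) (k : Fin n3),
      (frob (projT Φ U V (unitTensor i j k))) ^ 2
        ≤ 2 * μ * (∑ t, ((slice Φ Z t).rank : ℝ)) / ((min n1 n2 : ℝ) * n3) := by
  
  intro i j k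
  have hΦ1 : Φ * Φᴴ = 1 := by
    rw [← Matrix.star_eq_conjTranspose]; exact (Matrix.mem_unitaryGroup_iff).mp hΦ
  have hΦ2 : Φᴴ * Φ = 1 := by
    rw [← Matrix.star_eq_conjTranspose]; exact (Matrix.mem_unitaryGroup_iff').mp hΦ
  have hsliceE : ∀ t, slice Φ (unitTensor i j k : Tensor n1 n2 n3) t
      = Matrix.of fun a b => if a = i ∧ b = j then Φ t k else 0 := by
    intro t; ext a b
    show (∑ c, Φ t c * (if a = i ∧ b = j ∧ c = k then 1 else 0)) = _
    by_cases ha : a = i <;> by_cases hb : b = j <;>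
      simp [ha, hb, mul_ite, mul_one, mul_zero, Finset.sum_ite_eq']
  have hP : ∀ t, slice Φ (projT Φ U V (unitTensor i j k)) t
      = (slice Φ U t * (slice Φ U t)ᴴ) * slice Φ (unitTensor i j k) t
        + slice Φ (unitTensor i j k) t * (slice Φ V t * (slice Φ V t)ᴴ)
        - ((slice Φ U t * (slice Φ U t)ᴴ) * slice Φ (unitTensor i j k) t)
            * (slice Φ V t * (slice Φ V t)ᴴ) := by
    intro t
    unfold Tensor.projT
    rw [my_slice_sub, my_slice_add]
    simp only [my_slice_tprod hΦ1, my_slice_tconj hΦ1]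
  have per_t : ∀ t, ∑ a, ∑ b,
        Complex.normSq (slice Φ (projT Φ U V (unitTensor i j k)) t a b)
      ≤ Complex.normSq (Φ t k) * ((∑ a, Complex.normSq (slice Φ U t i a))
          + (∑ b, Complex.normSq (slice Φ V t j b))) := by
    intro t
    have hkey := my_key (slice Φ U t) (slice Φ V t) (hSVD.U_orth t) (hSVD.V_orth t) i j (Φ t k)
    refine le_trans (le_of_eq ?_) hkey
    refine Finset.sum_congr rfl fun a _ => Finset.sum_congr rfl fun b _ => ?_
    congr 1
    rw [hP t]
    set Qm := slice Φ U t * (slice Φ U t)ᴴ with hQm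
    set Rm := slice Φ V t * (slice Φ V t)ᴴ with hRm
    set Em := slice Φ (unitTensor i j k : Tensor n1 n2 n3) t with hEm
    have hQE : ∀ a b, (Qm * Em) a b = if b = j then Qm a i * Φ t k else 0 := by
      intro a b
      rw [Matrix.mul_apply]
      rw [hEm, hsliceE t]
      by_cases hb : b = j <;>
        simp [hb, mul_ite, mul_one, mul_zero, Finset.sum_ite_eq']
    have hER : ∀ a b, (Em * Rm) a b = if a = i then Φ t k * Rm j b else 0 := by
      intro a b
      rw [Matrix.mul_apply]
      rw [hEm, hsliceE t]
      by_cases ha : a = i <;>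
        simp [ha, ite_mul, one_mul, zero_mul, Finset.sum_ite_eq]
    have hQER : ((Qm * Em) * Rm) a b = Qm a i * Φ t k * Rm j b := by
      rw [Matrix.mul_apply]
      simp only [hQE]
      simp [ite_mul, zero_mul, Finset.sum_ite_eq]
    rw [Matrix.sub_apply, Matrix.add_apply, hQE, hER, hQER]
  have e1 : frob (tprod Φ (tconj Φ U) (colBasis i k)) ^ 2
      = ∑ t, Complex.normSq (Φ t k) * ∑ a, Complex.normSq (slice Φ U t i a) := by
    rw [my_frob_sq_slices hΦ2]
    refine Finset.sum_congr rfl fun t _ => ?_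
    rw [my_slice_tprod hΦ1, my_slice_tconj hΦ1]
    have hC : ∀ c (b : Fin 1), slice Φ (colBasis i k : Tensor n1 1 n3) t c b
        = if c = i then Φ t k else 0 := by
      intro c b
      show (∑ m, Φ t m * (if c = i ∧ m = k then 1 else 0)) = _
      by_cases hc : c = i <;>
        simp [hc, mul_ite, mul_one, mul_zero, Finset.sum_ite_eq']
    rw [Finset.mul_sum]
    refine Finset.sum_congr rfl fun a _ => ?_
    rw [Fin.sum_univ_one]
    have hent : ((slice Φ U t)ᴴ * slice Φ (colBasis i k : Tensor n1 1 n3) t) a 0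
        = conj (slice Φ U t i a) * Φ t k := by
      rw [Matrix.mul_apply]
      simp only [hC]
      simp [Matrix.conjTranspose_apply, Complex.star_def, mul_ite, mul_one, mul_zero,
        Finset.sum_ite_eq']
    rw [hent, Complex.normSq_mul, Complex.normSq_conj]
    ring
  have e2 : frob (tprod Φ (tconj Φ V) (colBasis j k)) ^ 2
      = ∑ t, Complex.normSq (Φ t k) * ∑ b, Complex.normSq (slice Φ V t j b) := by
    rw [my_frob_sq_slices hΦ2]
    refine Finset.sum_congr rfl fun t _ => ?_
    rw [my_slice_tprod hΦ1, my_slice_tconj hΦ1]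
    have hC : ∀ c (b : Fin 1), slice Φ (colBasis j k : Tensor n2 1 n3) t c b
        = if c = j then Φ t k else 0 := by
      intro c b
      show (∑ m, Φ t m * (if c = j ∧ m = k then 1 else 0)) = _
      by_cases hc : c = j <;>
        simp [hc, mul_ite, mul_one, mul_zero, Finset.sum_ite_eq']
    rw [Finset.mul_sum]
    refine Finset.sum_congr rfl fun a _ => ?_
    rw [Fin.sum_univ_one]
    have hent : ((slice Φ V t)ᴴ * slice Φ (colBasis j k : Tensor n2 1 n3) t) a 0
        = conj (slice Φ V t j a) * Φ t k := by
      rw [Matrix.mul_apply]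
      simp only [hC]
      simp [Matrix.conjTranspose_apply, Complex.star_def, mul_ite, mul_one, mul_zero,
        Finset.sum_ite_eq']
    rw [hent, Complex.normSq_mul, Complex.normSq_conj]
    ring
  have hUb : ∑ t, Complex.normSq (Φ t k) * ∑ a, Complex.normSq (slice Φ U t i a)
      ≤ μ * (∑ t, ((slice Φ Z t).rank : ℝ)) / (n1 * n3) := e1 ▸ hinc.1 i k
  have hVb : ∑ t, Complex.normSq (Φ t k) * ∑ b, Complex.normSq (slice Φ V t j b)
      ≤ μ * (∑ t, ((slice Φ Z t).rank : ℝ)) / (n2 * n3) := e2 ▸ hinc.2 j k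
  set m : ℝ := μ * (∑ t, ((slice Φ Z t).rank : ℝ)) with hm
  have hm0 : 0 ≤ m :=
    mul_nonneg (le_trans zero_le_one hμ) (Finset.sum_nonneg fun _ _ => Nat.cast_nonneg _)
  have hn1 : (0:ℝ) < n1 := by exact_mod_cast i.pos
  have hn2 : (0:ℝ) < n2 := by exact_mod_cast j.pos
  have hn3 : (0:ℝ) < n3 := by exact_mod_cast k.pos
  have hminpos : (0:ℝ) < (min n1 n2 : ℝ) * n3 := by
    have : (0:ℝ) < (min n1 n2 : ℝ) := lt_min hn1 hn2
    exact mul_pos this hn3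
  have hle1 : (min n1 n2 : ℝ) * n3 ≤ (n1:ℝ) * n3 :=
    mul_le_mul_of_nonneg_right (min_le_left _ _) hn3.le
  have hle2 : (min n1 n2 : ℝ) * n3 ≤ (n2:ℝ) * n3 :=
    mul_le_mul_of_nonneg_right (min_le_right _ _) hn3.le
  calc frob (projT Φ U V (unitTensor i j k)) ^ 2
      = ∑ t, ∑ a, ∑ b, Complex.normSq (slice Φ (projT Φ U V (unitTensor i j k)) t a b) :=
        my_frob_sq_slices hΦ2 _
    _ ≤ ∑ t, Complex.normSq (Φ t k) * ((∑ a, Complex.normSq (slice Φ U t i a))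
          + (∑ b, Complex.normSq (slice Φ V t j b))) :=
        Finset.sum_le_sum fun t _ => per_t t
    _ = (∑ t, Complex.normSq (Φ t k) * ∑ a, Complex.normSq (slice Φ U t i a))
        + ∑ t, Complex.normSq (Φ t k) * ∑ b, Complex.normSq (slice Φ V t j b) := by
        rw [← Finset.sum_add_distrib]
        exact Finset.sum_congr rfl fun t _ => by ring
    _ ≤ m / (n1 * n3) + m / (n2 * n3) := add_le_add hUb hVb
    _ ≤ m / ((min n1 n2 : ℝ) * n3) + m / ((min n1 n2 : ℝ) * n3) :=
        add_le_add (div_le_div_of_nonneg_left hm0 hminpos hle1)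
          (div_le_div_of_nonneg_left hm0 hminpos hle2)
    _ = 2 * μ * (∑ t, ((slice Φ Z t).rank : ℝ)) / ((min n1 n2 : ℝ) * n3) := by
        rw [← add_div, hm]; ring
end
end

section
/- Let Z ∈ ℂ^{n1×n2×n3} admit a skinny transformed tensor SVD Z = U ⋄ S ⋄ Vᴴ with transformed multi-rank (r_1,…,r_{n3}), and suppose Z satisfies the tensor incoherence conditions with parameter μ ≥ 1. Then ‖U ⋄ Vᴴ‖_{∞,2} ≤ √(μ (Σ_{t=1}^{n3} r_t) / n_(2)). -/
open scoped BigOperators ComplexConjugate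
open MeasureTheory Matrix

noncomputable section

open Tensor



namespace Statement7

open Complex

variable {n1 n2 n3 n4 r : ℕ} {Φ : Matrix (Fin n3) (Fin n3) ℂ}

lemma sum_normSq_transform (hΦ : Φ ∈ Matrix.unitaryGroup (Fin n3) ℂ) (v : Fin n3 → ℂ) :
    ∑ t, Complex.normSq (∑ k, Φ t k * v k) = ∑ k, Complex.normSq (v k) := by
  have h : Φᴴ * Φ = 1 := Matrix.mem_unitaryGroup_iff'.mp hΦ
  have key : star (Φ.mulVec v) ⬝ᵥ (Φ.mulVec v) = star v ⬝ᵥ v := by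
    rw [Matrix.star_mulVec, Matrix.dotProduct_mulVec, Matrix.vecMul_vecMul, h, Matrix.vecMul_one]
  have key2 : ((∑ t, Complex.normSq (Φ.mulVec v t) : ℝ) : ℂ)
      = ((∑ k, Complex.normSq (v k) : ℝ) : ℂ) := by
    push_cast
    simpa [dotProduct, Pi.star_apply, Complex.star_def, mul_comm, Complex.mul_conj]
      using key
  have := Complex.ofReal_injective key2
  simpa [Matrix.mulVec, dotProduct] using this

lemma diag_mul_conjTranspose {m n : ℕ} (M : Matrix (Fin m) (Fin n) ℂ) (i : Fin m) :
    (M * Mᴴ) i i = ((∑ j, Complex.normSq (M i j) : ℝ) : ℂ) := by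
  push_cast
  simp [Matrix.mul_apply, Matrix.conjTranspose_apply, Complex.star_def, Complex.mul_conj]

lemma diag_conjTranspose_mul {m n : ℕ} (M : Matrix (Fin m) (Fin n) ℂ) (j : Fin n) :
    (Mᴴ * M) j j = ((∑ a, Complex.normSq (M a j) : ℝ) : ℂ) := by
  push_cast
  simp [Matrix.mul_apply, Matrix.conjTranspose_apply, Complex.star_def, mul_comm,
    Complex.mul_conj]

lemma row_normSq_mul_orth {n1 n2 r : ℕ} (A : Matrix (Fin n1) (Fin r) ℂ)
    (B : Matrix (Fin n2) (Fin r) ℂ) (hB : Bᴴ * B = 1) (i : Fin n1) :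
    ∑ b, Complex.normSq ((A * Bᴴ) i b) = ∑ c, Complex.normSq (A i c) := by
  have h : ((A * Bᴴ) * (A * Bᴴ)ᴴ) i i = (A * Aᴴ) i i := by
    rw [Matrix.conjTranspose_mul, Matrix.conjTranspose_conjTranspose,
      Matrix.mul_assoc, ← Matrix.mul_assoc Bᴴ B Aᴴ, hB, Matrix.one_mul]
  rw [diag_mul_conjTranspose, diag_mul_conjTranspose] at h
  exact_mod_cast h

lemma col_normSq_mul_orth {n1 n2 r : ℕ} (A : Matrix (Fin n1) (Fin r) ℂ)
    (B : Matrix (Fin n2) (Fin r) ℂ) (hA : Aᴴ * A = 1) (j : Fin n2) :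
    ∑ a, Complex.normSq ((A * Bᴴ) a j) = ∑ c, Complex.normSq (B j c) := by
  have h : ((A * Bᴴ)ᴴ * (A * Bᴴ)) j j = (B * Bᴴ) j j := by
    rw [Matrix.conjTranspose_mul, Matrix.conjTranspose_conjTranspose,
      Matrix.mul_assoc, ← Matrix.mul_assoc Aᴴ A Bᴴ, hA, Matrix.one_mul]
  rw [diag_conjTranspose_mul, diag_mul_conjTranspose] at h
  exact_mod_cast h

lemma slice_unslice (hΦ : Φ ∈ Matrix.unitaryGroup (Fin n3) ℂ)
    (M : Fin n3 → Matrix (Fin n1) (Fin n2) ℂ) (t : Fin n3) :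
    slice Φ (unslice Φ M) t = M t := by
  ext i j
  simp only [Tensor.slice, Tensor.unslice, Matrix.of_apply]
  have h1 : Φ * Φᴴ = 1 := Matrix.mem_unitaryGroup_iff.mp hΦ
  have h2 : ∀ s, (∑ k, Φ t k * (starRingEnd ℂ) (Φ s k)) = if t = s then 1 else 0 := by
    intro s
    have := congrArg (fun M => M t s) h1
    simpa [Matrix.mul_apply, Matrix.conjTranspose_apply, Matrix.one_apply,
      Complex.star_def] using this
  calc ∑ k, Φ t k * (∑ s, (starRingEnd ℂ) (Φ s k) * M s i j)
      = ∑ s, (∑ k, Φ t k * (starRingEnd ℂ) (Φ s k)) * M s i j := by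
        simp_rw [Finset.mul_sum, Finset.sum_mul]
        rw [Finset.sum_comm]
        simp_rw [mul_assoc]
    _ = M t i j := by simp [h2]

lemma slice_tprod (hΦ : Φ ∈ Matrix.unitaryGroup (Fin n3) ℂ)
    (A : Tensor n1 n2 n3) (B : Tensor n2 n4 n3) (t : Fin n3) :
    slice Φ (tprod Φ A B) t = slice Φ A t * slice Φ B t := slice_unslice hΦ _ t

lemma slice_tconj (hΦ : Φ ∈ Matrix.unitaryGroup (Fin n3) ℂ)
    (A : Tensor n1 n2 n3) (t : Fin n3) :
    slice Φ (tconj Φ A) t = (slice Φ A t)ᴴ := slice_unslice hΦ _ t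

lemma tube_sum (hΦ : Φ ∈ Matrix.unitaryGroup (Fin n3) ℂ)
    (A : Tensor n1 n2 n3) (i : Fin n1) (j : Fin n2) :
    ∑ k, Complex.normSq (A i j k) = ∑ t, Complex.normSq (slice Φ A t i j) := by
  have := (sum_normSq_transform hΦ (fun k => A i j k)).symm
  simpa [Tensor.slice] using this

lemma frob_sq (A : Tensor n1 n2 n3) :
    frob A ^ 2 = ∑ i, ∑ j, ∑ k, Complex.normSq (A i j k) :=
  Real.sq_sqrt (by
    refine Finset.sum_nonneg fun _ _ => Finset.sum_nonneg fun _ _ =>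
      Finset.sum_nonneg fun _ _ => Complex.normSq_nonneg _)

lemma slice_colBasis {n : ℕ} (i : Fin n) (k t : Fin n3) (a : Fin n) (b : Fin 1) :
    slice Φ (colBasis i k) t a b = if a = i then Φ t k else 0 := by
  simp only [Tensor.slice, Tensor.colBasis, Matrix.of_apply, mul_ite, mul_one, mul_zero, ite_and]
  by_cases h : a = i <;> simp [h]

lemma sum_frob_sq (hΦ : Φ ∈ Matrix.unitaryGroup (Fin n3) ℂ)
    {n : ℕ} (W : Tensor n r n3) (i : Fin n) :
    ∑ k, frob (tprod Φ (tconj Φ W) (colBasis i k)) ^ 2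
      = ∑ t, ∑ a, Complex.normSq (slice Φ W t i a) := by
  have hrow : ∀ t : Fin n3, ∑ k, Complex.normSq (Φ t k) = 1 := by
    intro t
    have h1 : Φ * Φᴴ = 1 := Matrix.mem_unitaryGroup_iff.mp hΦ
    have h2 := diag_mul_conjTranspose Φ t
    rw [h1] at h2
    have h3 : ((∑ k, Complex.normSq (Φ t k) : ℝ) : ℂ) = ((1 : ℝ) : ℂ) := by
      rw [← h2]; simp [Matrix.one_apply]
    exact_mod_cast h3
  have entry : ∀ (k t : Fin n3) (a : Fin r) (b : Fin 1),
      slice Φ (tprod Φ (tconj Φ W) (colBasis i k)) t a b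
        = (starRingEnd ℂ) (slice Φ W t i a) * Φ t k := by
    intro k t a b
    rw [slice_tprod hΦ, slice_tconj hΦ]
    simp [Matrix.mul_apply, Matrix.conjTranspose_apply, slice_colBasis,
      Complex.star_def, mul_ite, mul_zero]
  have hk : ∀ k, frob (tprod Φ (tconj Φ W) (colBasis i k)) ^ 2
      = ∑ t, (∑ a, Complex.normSq (slice Φ W t i a)) * Complex.normSq (Φ t k) := by
    intro k
    rw [frob_sq]
    calc ∑ a, ∑ b : Fin 1, ∑ k', Complex.normSq (tprod Φ (tconj Φ W) (colBasis i k) a b k')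
        = ∑ a, ∑ b : Fin 1, ∑ t,
            Complex.normSq (slice Φ (tprod Φ (tconj Φ W) (colBasis i k)) t a b) := by
          exact Finset.sum_congr rfl fun a _ => Finset.sum_congr rfl fun b _ =>
            tube_sum hΦ _ a b
      _ = ∑ a, ∑ b : Fin 1, ∑ t,
            Complex.normSq (slice Φ W t i a) * Complex.normSq (Φ t k) := by
          simp only [entry, Complex.normSq_mul, Complex.normSq_conj]
      _ = ∑ a, ∑ t, Complex.normSq (slice Φ W t i a) * Complex.normSq (Φ t k) := by
          simp
      _ = ∑ t, (∑ a, Complex.normSq (slice Φ W t i a)) * Complex.normSq (Φ t k) := by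
          rw [Finset.sum_comm]
          simp [Finset.sum_mul]
  simp_rw [hk]
  rw [Finset.sum_comm]
  refine Finset.sum_congr rfl fun t _ => ?_
  rw [← Finset.mul_sum, hrow t, mul_one]

end Statement7

open Statement7

/-- ‖U ⋄ Vᴴ‖_{∞,2} bound. -/
theorem statement7 {n1 n2 n3 r : ℕ} (Φ : Matrix (Fin n3) (Fin n3) ℂ)
    (hΦ : Φ ∈ Matrix.unitaryGroup (Fin n3) ℂ)
    (Z : Tensor n1 n2 n3) (U : Tensor n1 r n3) (S : Tensor r r n3) (V : Tensor n2 r n3)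
    (hSVD : SkinnySVD Φ Z r U S V)
    (μ : ℝ) (hμ : 1 ≤ μ) (hinc : Incoherent Φ Z U V μ) :
    infty2Norm (tprod Φ U (tconj Φ V))
      ≤ Real.sqrt (μ * (∑ t, ((slice Φ Z t).rank : ℝ)) / (min n1 n2 : ℝ)) := by
  obtain ⟨hUinc, hVinc⟩ := hinc
  set ρ : ℝ := μ * ∑ t, ((slice Φ Z t).rank : ℝ) with hρdef
  have hρ0 : 0 ≤ ρ :=
    mul_nonneg (zero_le_one.trans hμ) (Finset.sum_nonneg fun _ _ => Nat.cast_nonneg _)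
  have key : ∀ (n : ℕ) (W : Tensor n r n3),
      (∀ (i : Fin n) (k : Fin n3),
        frob (tprod Φ (tconj Φ W) (colBasis i k)) ^ 2 ≤ ρ / (n * n3)) →
      ∀ i : Fin n, ∑ t, ∑ a, Complex.normSq (slice Φ W t i a) ≤ ρ / n := by
    intro n W hWinc i
    rw [← sum_frob_sq hΦ W i]
    calc ∑ k, frob (tprod Φ (tconj Φ W) (colBasis i k)) ^ 2
        ≤ ∑ _k : Fin n3, ρ / (n * n3) := Finset.sum_le_sum fun k _ => hWinc i k
      _ = n3 * (ρ / (n * n3)) := by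
          simp [Finset.sum_const, mul_comm]
      _ ≤ ρ / n := by
          rcases Nat.eq_zero_or_pos n3 with h3 | h3
          · subst h3
            simp [div_nonneg hρ0 (Nat.cast_nonneg n)]
          · rcases Nat.eq_zero_or_pos n with hn | hn
            · subst hn; simp
            · apply le_of_eq
              have hn' : (n : ℝ) ≠ 0 := Nat.cast_ne_zero.mpr hn.ne'
              have h3' : (n3 : ℝ) ≠ 0 := Nat.cast_ne_zero.mpr h3.ne'
              field_simp
  unfold infty2Norm
  apply max_le
  · refine Real.iSup_le (fun i => ?_) (Real.sqrt_nonneg _)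
    refine Real.sqrt_le_sqrt ?_
    rcases Nat.eq_zero_or_pos n2 with h2 | h2
    · subst h2
      simp
    · have step1 : ∑ b, ∑ k, Complex.normSq (tprod Φ U (tconj Φ V) i b k)
          = ∑ t, ∑ a, Complex.normSq (slice Φ U t i a) := by
        calc ∑ b, ∑ k, Complex.normSq (tprod Φ U (tconj Φ V) i b k)
            = ∑ b, ∑ t, Complex.normSq (slice Φ (tprod Φ U (tconj Φ V)) t i b) :=
              Finset.sum_congr rfl fun b _ => tube_sum hΦ _ i b
          _ = ∑ t, ∑ b, Complex.normSq ((slice Φ U t * (slice Φ V t)ᴴ) i b) := by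
              rw [Finset.sum_comm]
              simp_rw [slice_tprod hΦ, slice_tconj hΦ]
          _ = ∑ t, ∑ a, Complex.normSq (slice Φ U t i a) :=
              Finset.sum_congr rfl fun t _ =>
                row_normSq_mul_orth _ _ (hSVD.V_orth t) i
      rw [step1]
      refine le_trans (key n1 U hUinc i) ?_
      have hpos : (0 : ℝ) < min (n1 : ℝ) (n2 : ℝ) :=
        lt_min (by exact_mod_cast i.pos) (by exact_mod_cast h2)
      exact div_le_div_of_nonneg_left hρ0 hpos (min_le_left _ _) |>.trans_eq rfl
  · refine Real.iSup_le (fun j => ?_) (Real.sqrt_nonneg _)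
    refine Real.sqrt_le_sqrt ?_
    rcases Nat.eq_zero_or_pos n1 with h1 | h1
    · subst h1
      simp
    · have step1 : ∑ a, ∑ k, Complex.normSq (tprod Φ U (tconj Φ V) a j k)
          = ∑ t, ∑ c, Complex.normSq (slice Φ V t j c) := by
        calc ∑ a, ∑ k, Complex.normSq (tprod Φ U (tconj Φ V) a j k)
            = ∑ a, ∑ t, Complex.normSq (slice Φ (tprod Φ U (tconj Φ V)) t a j) :=
              Finset.sum_congr rfl fun a _ => tube_sum hΦ _ a j
          _ = ∑ t, ∑ a, Complex.normSq ((slice Φ U t * (slice Φ V t)ᴴ) a j) := by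
              rw [Finset.sum_comm]
              simp_rw [slice_tprod hΦ, slice_tconj hΦ]
          _ = ∑ t, ∑ c, Complex.normSq (slice Φ V t j c) :=
              Finset.sum_congr rfl fun t _ =>
                col_normSq_mul_orth _ _ (hSVD.U_orth t) j
      rw [step1]
      refine le_trans (key n2 V hVinc j) ?_
      have hpos : (0 : ℝ) < min (n1 : ℝ) (n2 : ℝ) :=
        lt_min (by exact_mod_cast h1) (by exact_mod_cast j.pos)
      exact div_le_div_of_nonneg_left hρ0 hpos (min_le_right _ _)
end
end

section
/- Let Z ∈ ℂ^{n1×n2×n3} admit a skinny transformed tensor SVD Z = U ⋄ S ⋄ Vᴴ, let T be the subspace determined by U and V, and let Ω ⊆ [n1]×[n2]×[n3]. Suppose Y ∈ ℂ^{n1×n2×n3} satisfies P_Ω(Y) = Y, ‖P_T(Y) − U ⋄ Vᴴ‖_F ≤ 1/(4 n_(1) n_3), and ‖P_{T⊥}(Y)‖ ≤ 1/2 (tensor spectral norm). Then for every W ∈ ℂ^{n1×n2×n3} with P_Ω(W) = 0, ‖Z + W‖_TTNN ≥ ‖Z‖_TTNN + (1/2)‖P_{T⊥}(W)‖_TTNN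 − (1/(4 n_(1) n_3))‖P_T(W)‖_F. -/
open scoped BigOperators ComplexConjugate
open MeasureTheory Matrix

noncomputable section

open Tensor


namespace S9

variable {m n p : ℕ}

/-- squared ℓ² norm of a complex vector -/
def nsq {n : ℕ} (v : Fin n → ℂ) : ℝ := ∑ i, Complex.normSq (v i)

lemma nsq_nonneg (v : Fin n → ℂ) : 0 ≤ nsq v :=
  Finset.sum_nonneg fun _ _ => Complex.normSq_nonneg _

lemma norm_euclidean (x : EuclideanSpace ℂ (Fin n)) :
    ‖x‖ = Real.sqrt (nsq (WithLp.equiv 2 _ x)) := by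
  rw [EuclideanSpace.norm_eq]
  congr 1
  unfold nsq
  congr 1; ext i
  simp only [Complex.normSq_eq_norm_sq]
  rfl

/-- spectral norm of a matrix -/
def specNormM' {m n : ℕ} (M : Matrix (Fin m) (Fin n) ℂ) : ℝ :=
  ‖LinearMap.toContinuousLinearMap (Matrix.toEuclideanLin M)‖

lemma specNormM'_nonneg (M : Matrix (Fin m) (Fin n) ℂ) : 0 ≤ specNormM' M := norm_nonneg _

lemma nsq_mulVec_le (M : Matrix (Fin m) (Fin n) ℂ) (v : Fin n → ℂ) :
    nsq (M *ᵥ v) ≤ (specNormM' M)^2 * nsq v := by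
  have h := (LinearMap.toContinuousLinearMap (Matrix.toEuclideanLin M)).le_opNorm
    ((WithLp.equiv 2 (Fin n → ℂ)).symm v)
  rw [LinearMap.coe_toContinuousLinearMap'] at h
  rw [show Matrix.toEuclideanLin M ((WithLp.equiv 2 (Fin n → ℂ)).symm v)
    = (WithLp.equiv 2 (Fin m → ℂ)).symm (M *ᵥ v) from rfl] at h
  rw [norm_euclidean, norm_euclidean] at h
  have h2 : (WithLp.equiv 2 (Fin m → ℂ)) ((WithLp.equiv 2 (Fin m → ℂ)).symm (M *ᵥ v)) = M *ᵥ v :=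
    (WithLp.equiv 2 (Fin m → ℂ)).apply_symm_apply _
  have h3 : (WithLp.equiv 2 (Fin n → ℂ)) ((WithLp.equiv 2 (Fin n → ℂ)).symm v) = v :=
    (WithLp.equiv 2 (Fin n → ℂ)).apply_symm_apply _
  rw [h2, h3] at h
  have h4 : Real.sqrt (nsq (M *ᵥ v)) ^ 2 ≤ (specNormM' M * Real.sqrt (nsq v))^2 := by
    apply sq_le_sq'
    · have := Real.sqrt_nonneg (nsq (M *ᵥ v))
      nlinarith [specNormM'_nonneg M, Real.sqrt_nonneg (nsq v)]
    · exact h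
  rw [Real.sq_sqrt (nsq_nonneg _)] at h4
  calc nsq (M *ᵥ v) ≤ (specNormM' M * Real.sqrt (nsq v))^2 := h4
    _ = (specNormM' M)^2 * (Real.sqrt (nsq v))^2 := by ring
    _ = (specNormM' M)^2 * nsq v := by rw [Real.sq_sqrt (nsq_nonneg _)]

lemma specNormM'_le {M : Matrix (Fin m) (Fin n) ℂ} {c : ℝ} (hc : 0 ≤ c)
    (h : ∀ v, nsq (M *ᵥ v) ≤ c^2 * nsq v) : specNormM' M ≤ c := by
  apply ContinuousLinearMap.opNorm_le_bound _ hc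
  intro x
  rw [LinearMap.coe_toContinuousLinearMap']
  have hx : x = (WithLp.equiv 2 (Fin n → ℂ)).symm ((WithLp.equiv 2 _ ) x) :=
    ((WithLp.equiv 2 (Fin n → ℂ)).symm_apply_apply x).symm
  set v := (WithLp.equiv 2 (Fin n → ℂ)) x with hv
  rw [hx, show Matrix.toEuclideanLin M ((WithLp.equiv 2 (Fin n → ℂ)).symm v)
    = (WithLp.equiv 2 (Fin m → ℂ)).symm (M *ᵥ v) from rfl, norm_euclidean, norm_euclidean]
  have h2 : (WithLp.equiv 2 (Fin m → ℂ)) ((WithLp.equiv 2 (Fin m → ℂ)).symm (M *ᵥ v)) = M *ᵥ v :=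
    (WithLp.equiv 2 (Fin m → ℂ)).apply_symm_apply _
  have h3 : (WithLp.equiv 2 (Fin n → ℂ)) ((WithLp.equiv 2 (Fin n → ℂ)).symm v) = v :=
    (WithLp.equiv 2 (Fin n → ℂ)).apply_symm_apply _
  rw [h2, h3]
  calc Real.sqrt (nsq (M *ᵥ v)) ≤ Real.sqrt (c^2 * nsq v) := Real.sqrt_le_sqrt (h v)
    _ = c * Real.sqrt (nsq v) := by
        rw [Real.sqrt_mul (sq_nonneg c), Real.sqrt_sq hc]

lemma abs_dot_le (u : Fin n → ℂ) (w : Fin n → ℂ) :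
    ‖star u ⬝ᵥ w‖ ≤ Real.sqrt (nsq u) * Real.sqrt (nsq w) := by
  have h := norm_inner_le_norm (𝕜 := ℂ)
    ((WithLp.equiv 2 (Fin n → ℂ)).symm u) ((WithLp.equiv 2 (Fin n → ℂ)).symm w)
  rw [norm_euclidean, norm_euclidean] at h
  simp only [(WithLp.equiv 2 (Fin n → ℂ)).apply_symm_apply] at h
  have hi : (inner ℂ ((WithLp.equiv 2 (Fin n → ℂ)).symm u) ((WithLp.equiv 2 (Fin n → ℂ)).symm w) : ℂ)
      = star u ⬝ᵥ w := by
    rw [PiLp.inner_apply, dotProduct]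
    refine Finset.sum_congr rfl fun i _ => ?_
    rw [RCLike.inner_apply']
    rfl
  rw [hi] at h
  exact h

def cinner (A B : Matrix (Fin m) (Fin n) ℂ) : ℂ := Matrix.trace (Aᴴ * B)

lemma cinner_eq_sum (A B : Matrix (Fin m) (Fin n) ℂ) :
    cinner A B = ∑ i, ∑ j, (starRingEnd ℂ) (A i j) * B i j := by
  unfold cinner Matrix.trace
  simp only [Matrix.diag, Matrix.mul_apply, Matrix.conjTranspose_apply, Complex.star_def]
  rw [Finset.sum_comm]

lemma cinner_add_left (A B C : Matrix (Fin m) (Fin n) ℂ) :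
    cinner (A + B) C = cinner A C + cinner B C := by
  simp [cinner, Matrix.conjTranspose_add, Matrix.add_mul]

lemma cinner_add_right (A B C : Matrix (Fin m) (Fin n) ℂ) :
    cinner A (B + C) = cinner A B + cinner A C := by
  simp [cinner, Matrix.mul_add]

lemma cinner_sub_left (A B C : Matrix (Fin m) (Fin n) ℂ) :
    cinner (A - B) C = cinner A C - cinner B C := by
  simp [cinner, Matrix.conjTranspose_sub, Matrix.sub_mul]

lemma cinner_sub_right (A B C : Matrix (Fin m) (Fin n) ℂ) :
    cinner A (B - C) = cinner A B - cinner A C := by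
  simp [cinner, Matrix.mul_sub]

lemma cinner_zero_right (A : Matrix (Fin m) (Fin n) ℂ) : cinner A 0 = 0 := by
  simp [cinner]

lemma dot_mulVec_mulVec (M : Matrix (Fin m) (Fin n) ℂ) (N : Matrix (Fin m) (Fin p) ℂ)
    (v : Fin n → ℂ) (w : Fin p → ℂ) :
    star (M *ᵥ v) ⬝ᵥ (N *ᵥ w) = star v ⬝ᵥ ((Mᴴ * N) *ᵥ w) := by
  rw [Matrix.star_mulVec, Matrix.dotProduct_mulVec, Matrix.dotProduct_mulVec,
    Matrix.vecMul_vecMul]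

lemma nsq_eq_re_dot (v : Fin n → ℂ) : nsq v = (star v ⬝ᵥ v).re := by
  unfold nsq
  rw [dotProduct, Complex.re_sum]
  refine Finset.sum_congr rfl fun i _ => ?_
  simp [Pi.star_apply, Complex.normSq_apply, Complex.mul_re]

lemma nsq_mulVec (A : Matrix (Fin m) (Fin n) ℂ) (v : Fin n → ℂ) :
    nsq (A *ᵥ v) = (star v ⬝ᵥ ((Aᴴ * A) *ᵥ v)).re := by
  rw [← dot_mulVec_mulVec A A v v, ← nsq_eq_re_dot]

lemma re_dot_diagonal (d : Fin n → ℝ) (v : Fin n → ℂ) :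
    (star v ⬝ᵥ ((Matrix.diagonal (fun i => (d i : ℂ))) *ᵥ v)).re
      = ∑ i, d i * Complex.normSq (v i) := by
  rw [dotProduct, Complex.re_sum]
  refine Finset.sum_congr rfl fun i _ => ?_
  rw [Matrix.mulVec_diagonal]
  simp [Pi.star_apply, Complex.normSq_apply, Complex.mul_re, Complex.mul_im]
  ring

lemma nsq_add (u w : Fin n → ℂ) :
    nsq (u + w) = nsq u + nsq w + 2 * (star u ⬝ᵥ w).re := by
  unfold nsq
  rw [dotProduct, Complex.re_sum, ← Finset.sum_add_distrib, Finset.mul_sum,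
    ← Finset.sum_add_distrib]
  refine Finset.sum_congr rfl fun i _ => ?_
  simp only [Pi.add_apply, Pi.star_apply, Complex.normSq_apply, Complex.star_def,
    Complex.mul_re, Complex.conj_re, Complex.conj_im, Complex.add_re, Complex.add_im]
  ring

lemma trace_mul_diag (N : Matrix (Fin n) (Fin n) ℂ) (d : Fin n → ℝ) :
    Matrix.trace (N * Matrix.diagonal (fun i => (d i : ℂ))) = ∑ i, N i i * (d i : ℂ) := by
  unfold Matrix.trace
  refine Finset.sum_congr rfl fun i _ => ?_
  simp [Matrix.diag, Matrix.mul_diagonal]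

lemma col_nsq (A : Matrix (Fin m) (Fin n) ℂ) (i : Fin n) :
    (Aᴴ * A) i i = (nsq (fun a => A a i) : ℂ) := by
  rw [Matrix.mul_apply]
  unfold nsq
  push_cast
  refine Finset.sum_congr rfl fun a _ => ?_
  simp only [Matrix.conjTranspose_apply, Complex.star_def]
  rw [← Complex.normSq_eq_conj_mul_self]

section Proj
variable {P : Matrix (Fin m) (Fin m) ℂ} {Q : Matrix (Fin n) (Fin n) ℂ}

lemma pi_adj (hP : Pᴴ = P) (hQ : Qᴴ = Q) (A X : Matrix (Fin m) (Fin n) ℂ) :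
    cinner ((1 - P) * A * (1 - Q)) X = cinner A ((1 - P) * X * (1 - Q)) := by
  have hPH : (1 - P)ᴴ = 1 - P := by rw [Matrix.conjTranspose_sub, Matrix.conjTranspose_one, hP]
  have hQH : (1 - Q)ᴴ = 1 - Q := by rw [Matrix.conjTranspose_sub, Matrix.conjTranspose_one, hQ]
  unfold cinner
  rw [Matrix.conjTranspose_mul, Matrix.conjTranspose_mul, hPH, hQH]
  rw [show (1 - Q) * (Aᴴ * (1-P)) * X = (1 - Q) * ((Aᴴ * ((1-P) * X))) by
    simp only [Matrix.mul_assoc]]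
  rw [Matrix.trace_mul_comm]
  simp only [Matrix.mul_assoc]

lemma pi_idem (hPP : P * P = P) (hQQ : Q * Q = Q) (X : Matrix (Fin m) (Fin n) ℂ) :
    (1 - P) * ((1 - P) * X * (1 - Q)) * (1 - Q) = (1 - P) * X * (1 - Q) := by
  have h1 : (1 - P) * (1 - P) = 1 - P := by
    rw [Matrix.sub_mul (1 : Matrix (Fin m) (Fin m) ℂ) P (1 - P), Matrix.mul_sub P 1 P, hPP]
    simp
  have h2 : (1 - Q) * (1 - Q) = 1 - Q := by
    rw [Matrix.sub_mul (1 : Matrix (Fin n) (Fin n) ℂ) Q (1 - Q), Matrix.mul_sub Q 1 Q, hQQ]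
    simp
  calc (1 - P) * ((1 - P) * X * (1 - Q)) * (1 - Q)
      = ((1 - P) * (1 - P)) * X * ((1 - Q) * (1 - Q)) := by simp only [Matrix.mul_assoc]
    _ = (1 - P) * X * (1 - Q) := by rw [h1, h2]

lemma cinner_perp_proj (hP : Pᴴ = P) (hQ : Qᴴ = Q) (hPP : P * P = P) (hQQ : Q * Q = Q)
    (A X : Matrix (Fin m) (Fin n) ℂ) :
    cinner ((1 - P) * A * (1 - Q)) (X - (1 - P) * X * (1 - Q)) = 0 := by
  rw [pi_adj hP hQ]
  have : (1 - P) * (X - (1 - P) * X * (1 - Q)) * (1 - Q) = 0 := by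
    rw [Matrix.mul_sub (1 - P) X ((1 - P) * X * (1 - Q)),
      Matrix.sub_mul ((1 - P) * X) ((1 - P) * ((1 - P) * X * (1 - Q))) (1 - Q),
      pi_idem hPP hQQ, sub_self]
  rw [this, cinner_zero_right]

lemma cinner_proj_perp (hP : Pᴴ = P) (hQ : Qᴴ = Q) (hPP : P * P = P) (hQQ : Q * Q = Q)
    (A X : Matrix (Fin m) (Fin n) ℂ) :
    cinner (A - (1 - P) * A * (1 - Q)) ((1 - P) * X * (1 - Q)) = 0 := by
  rw [cinner_sub_left, pi_adj hP hQ, pi_idem hPP hQQ, sub_self]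

end Proj


def nuclearNormM' {m n : ℕ} (M : Matrix (Fin m) (Fin n) ℂ) : ℝ :=
  ∑ i, Real.sqrt ((Matrix.isHermitian_conjTranspose_mul_self M).eigenvalues i)

lemma nuclearNormM'_nonneg (M : Matrix (Fin m) (Fin n) ℂ) : 0 ≤ nuclearNormM' M :=
  Finset.sum_nonneg fun _ _ => Real.sqrt_nonneg _

theorem svd_exists (M : Matrix (Fin m) (Fin n) ℂ) :
    ∃ (Um : Matrix (Fin m) (Fin n) ℂ) (Vm : Matrix (Fin n) (Fin n) ℂ) (σ : Fin n → ℝ),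
      (∀ i, 0 ≤ σ i) ∧
      M = Um * Matrix.diagonal (fun i => (σ i : ℂ)) * Vmᴴ ∧
      nuclearNormM' M = ∑ i, σ i ∧
      (∀ i, nsq (fun a => Um a i) ≤ 1) ∧ (∀ i, nsq (fun a => Vm a i) ≤ 1) ∧
      specNormM' (Um * Vmᴴ) ≤ 1 ∧
      (cinner (Um * Vmᴴ) M).re = ∑ i, σ i ∧
      (∀ P' : Matrix (Fin m) (Fin m) ℂ, P' * M = 0 → P' * (Um * Vmᴴ) = 0) ∧
      (∀ Q' : Matrix (Fin n) (Fin n) ℂ, M * Q' = 0 → (Um * Vmᴴ) * Q' = 0) := by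
  have hH := Matrix.isHermitian_conjTranspose_mul_self M
  set e : Fin n → ℝ := hH.eigenvalues with he_def
  have he : ∀ i, 0 ≤ e i := Matrix.eigenvalues_conjTranspose_mul_self_nonneg M
  set Vm : Matrix (Fin n) (Fin n) ℂ := (hH.eigenvectorUnitary : Matrix (Fin n) (Fin n) ℂ)
    with hVm_def
  have hVmem := hH.eigenvectorUnitary.2
  rw [Unitary.mem_iff] at hVmem
  have hVm1 : Vmᴴ * Vm = 1 := by
    rw [← Matrix.star_eq_conjTranspose]; exact hVmem.1
  have hVm2 : Vm * Vmᴴ = 1 := by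
    rw [← Matrix.star_eq_conjTranspose]; exact hVmem.2
  have spec : Mᴴ * M = Vm * Matrix.diagonal (fun i => (e i : ℂ)) * Vmᴴ := by
    have := hH.spectral_theorem
    rw [Unitary.conjStarAlgAut_apply] at this
    rw [← Matrix.star_eq_conjTranspose]
    exact this
  set σ : Fin n → ℝ := fun i => Real.sqrt (e i) with hσ_def
  have hσ : ∀ i, 0 ≤ σ i := fun i => Real.sqrt_nonneg _
  have hσe : ∀ i, σ i * σ i = e i := fun i => Real.mul_self_sqrt (he i)
  have key : (M * Vm)ᴴ * (M * Vm) = Matrix.diagonal (fun i => (e i : ℂ)) := by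
    rw [Matrix.conjTranspose_mul]
    calc Vmᴴ * Mᴴ * (M * Vm) = Vmᴴ * ((Mᴴ * M) * Vm) := by simp only [Matrix.mul_assoc]
      _ = Vmᴴ * (Vm * Matrix.diagonal (fun i => (e i : ℂ)) * Vmᴴ * Vm) := by rw [spec]
      _ = (Vmᴴ * Vm) * Matrix.diagonal (fun i => (e i : ℂ)) * (Vmᴴ * Vm) := by
          simp only [Matrix.mul_assoc]
      _ = Matrix.diagonal (fun i => (e i : ℂ)) := by rw [hVm1, Matrix.one_mul, Matrix.mul_one]
  have colMV : ∀ i, nsq (fun a => (M * Vm) a i) = e i := by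
    intro i
    have h1 : ((M * Vm)ᴴ * (M * Vm)) i i = Matrix.diagonal (fun i => (e i : ℂ)) i i :=
      congrArg (fun X => X i i) key
    rw [col_nsq] at h1
    rw [Matrix.diagonal_apply_eq] at h1
    exact_mod_cast h1
  have zerocol : ∀ i, σ i = 0 → ∀ a, (M * Vm) a i = 0 := by
    intro i hi a
    have hei : e i = 0 := by rw [← hσe i, hi, mul_zero]
    have h0 : nsq (fun a => (M * Vm) a i) = 0 := by rw [colMV i, hei]
    unfold nsq at h0
    have := (Finset.sum_eq_zero_iff_of_nonneg
      (fun x _ => Complex.normSq_nonneg ((M * Vm) x i))).mp h0 a (Finset.mem_univ a)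
    exact Complex.normSq_eq_zero.mp this
  set Um : Matrix (Fin m) (Fin n) ℂ := M * Vm * Matrix.diagonal (fun i => (((σ i)⁻¹ : ℝ) : ℂ))
    with hUm_def
  have Um_apply : ∀ a i, Um a i = (M * Vm) a i * (((σ i)⁻¹ : ℝ) : ℂ) := by
    intro a i; rw [hUm_def, Matrix.mul_diagonal]
  have fact1 : Um * Matrix.diagonal (fun i => (σ i : ℂ)) = M * Vm := by
    ext a i
    rw [Matrix.mul_diagonal, Um_apply]
    by_cases h : σ i = 0
    · rw [zerocol i h a, h]; simp
    · rw [mul_assoc]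
      have : (((σ i)⁻¹ : ℝ) : ℂ) * ((σ i : ℝ) : ℂ) = 1 := by
        push_cast
        rw [inv_mul_cancel₀ (by exact_mod_cast h : ((σ i : ℝ) : ℂ) ≠ 0)]
      rw [this, mul_one]
  have factor : M = Um * Matrix.diagonal (fun i => (σ i : ℂ)) * Vmᴴ := by
    rw [fact1, Matrix.mul_assoc, hVm2, Matrix.mul_one]
  set ind : Fin n → ℝ := fun i => (σ i)⁻¹ * σ i with hind_def
  have hind01 : ∀ i, ind i = 0 ∨ ind i = 1 := by
    intro i; by_cases h : σ i = 0
    · left; simp [hind_def, h]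
    · right; simp [hind_def, inv_mul_cancel₀ h]
  have hindσ : ∀ i, ind i * σ i = σ i := by
    intro i; by_cases h : σ i = 0
    · rw [h, mul_zero]
    · rw [hind_def]; simp [inv_mul_cancel₀ h]
  have UmHUm : Umᴴ * Um = Matrix.diagonal (fun i => ((ind i : ℝ) : ℂ)) := by
    rw [hUm_def, Matrix.conjTranspose_mul, Matrix.diagonal_conjTranspose]
    have hstar : (star fun i => (((σ i)⁻¹ : ℝ) : ℂ)) = fun i => (((σ i)⁻¹ : ℝ) : ℂ) := by
      funext i; simp [Pi.star_apply, Complex.star_def, Complex.conj_ofReal]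
    rw [hstar]
    calc Matrix.diagonal (fun i => (((σ i)⁻¹ : ℝ) : ℂ)) * (M * Vm)ᴴ *
          (M * Vm * Matrix.diagonal fun i => (((σ i)⁻¹ : ℝ) : ℂ))
        = Matrix.diagonal (fun i => (((σ i)⁻¹ : ℝ) : ℂ)) * ((M * Vm)ᴴ * (M * Vm)) *
            Matrix.diagonal (fun i => (((σ i)⁻¹ : ℝ) : ℂ)) := by simp only [Matrix.mul_assoc]
      _ = Matrix.diagonal (fun i => (((σ i)⁻¹ : ℝ) : ℂ)) *
            Matrix.diagonal (fun i => (e i : ℂ)) *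
            Matrix.diagonal (fun i => (((σ i)⁻¹ : ℝ) : ℂ)) := by rw [key]
      _ = Matrix.diagonal (fun i => ((ind i : ℝ) : ℂ)) := by
          rw [Matrix.diagonal_mul_diagonal, Matrix.diagonal_mul_diagonal]
          apply congrArg Matrix.diagonal
          funext i
          rw [← hσe i]
          by_cases h : σ i = 0
          · rw [hind_def]; simp [h]
          · have hc : ((σ i : ℝ) : ℂ) ≠ 0 := by exact_mod_cast h
            rw [hind_def]
            push_cast
            field_simp
  have Um_ind : Um * Matrix.diagonal (fun i => ((ind i : ℝ) : ℂ)) = Um := by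
    ext a i
    rw [Matrix.mul_diagonal]
    by_cases h : σ i = 0
    · rw [Um_apply, zerocol i h a]; simp
    · have hii : ind i = 1 := by
        rw [hind_def]; exact inv_mul_cancel₀ h
      rw [hii]; simp
  have col_Um : ∀ i, nsq (fun a => Um a i) ≤ 1 := by
    intro i
    have h1 : (Umᴴ * Um) i i = Matrix.diagonal (fun i => ((ind i : ℝ) : ℂ)) i i :=
      congrArg (fun X => X i i) UmHUm
    rw [col_nsq, Matrix.diagonal_apply_eq] at h1
    have h2 : nsq (fun a => Um a i) = ind i := by exact_mod_cast h1
    rw [h2]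
    rcases hind01 i with h | h <;> rw [h] <;> norm_num
  have col_Vm : ∀ i, nsq (fun a => Vm a i) ≤ 1 := by
    intro i
    have h1 : (Vmᴴ * Vm) i i = (1 : Matrix (Fin n) (Fin n) ℂ) i i := congrArg (fun X => X i i) hVm1
    rw [col_nsq] at h1
    rw [Matrix.one_apply_eq] at h1
    have h2 : nsq (fun a => Vm a i) = 1 := by exact_mod_cast h1
    rw [h2]
  have UmHM : Umᴴ * M = Matrix.diagonal (fun i => (σ i : ℂ)) * Vmᴴ := by
    calc Umᴴ * M = Umᴴ * (Um * Matrix.diagonal (fun i => (σ i : ℂ)) * Vmᴴ) := by rw [← factor]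
      _ = (Umᴴ * Um) * Matrix.diagonal (fun i => (σ i : ℂ)) * Vmᴴ := by
          simp only [Matrix.mul_assoc]
      _ = Matrix.diagonal (fun i => ((ind i : ℝ) : ℂ)) *
            Matrix.diagonal (fun i => (σ i : ℂ)) * Vmᴴ := by rw [UmHUm]
      _ = Matrix.diagonal (fun i => (σ i : ℂ)) * Vmᴴ := by
          rw [Matrix.diagonal_mul_diagonal]
          have hfun : (fun i => ((ind i : ℝ) : ℂ) * ((σ i : ℝ) : ℂ))
              = fun i => ((σ i : ℝ) : ℂ) := by
            funext i; rw [← Complex.ofReal_mul, hindσ i]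
          rw [hfun]
  refine ⟨Um, Vm, σ, hσ, factor, ?_, col_Um, col_Vm, ?_, ?_, ?_, ?_⟩
  · unfold nuclearNormM'
    rfl
  · -- specNormM' (Um * Vmᴴ) ≤ 1
    apply specNormM'_le zero_le_one
    intro v
    rw [one_pow, one_mul]
    have hmv : (Um * Vmᴴ) *ᵥ v = Um *ᵥ (Vmᴴ *ᵥ v) := by rw [Matrix.mulVec_mulVec]
    rw [hmv]
    set w := Vmᴴ *ᵥ v with hw
    have h1 : nsq (Um *ᵥ w) = ∑ i, ind i * Complex.normSq (w i) := by
      rw [nsq_mulVec, UmHUm, re_dot_diagonal]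
    have h2 : nsq (Um *ᵥ w) ≤ nsq w := by
      rw [h1]
      unfold nsq
      apply Finset.sum_le_sum
      intro i _
      rcases hind01 i with h | h <;> rw [h]
      · simp [Complex.normSq_nonneg]
      · simp
    have h3 : nsq w = nsq v := by
      rw [hw, nsq_mulVec, Matrix.conjTranspose_conjTranspose, hVm2, Matrix.one_mulVec,
        ← nsq_eq_re_dot]
    rw [← h3]; exact h2
  · -- cinner value
    have : cinner (Um * Vmᴴ) M = ((∑ i, σ i : ℝ) : ℂ) := by
      unfold cinner
      rw [Matrix.conjTranspose_mul, Matrix.conjTranspose_conjTranspose]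
      calc Matrix.trace (Vm * Umᴴ * M) = Matrix.trace (Vm * (Umᴴ * M)) := by
            rw [Matrix.mul_assoc]
        _ = Matrix.trace (Vm * (Matrix.diagonal (fun i => (σ i : ℂ)) * Vmᴴ)) := by rw [UmHM]
        _ = Matrix.trace ((Matrix.diagonal (fun i => (σ i : ℂ)) * Vmᴴ) * Vm) := by
            rw [Matrix.trace_mul_comm]
        _ = Matrix.trace (Matrix.diagonal (fun i => (σ i : ℂ)) * (Vmᴴ * Vm)) := by
            rw [Matrix.mul_assoc]
        _ = Matrix.trace (Matrix.diagonal (fun i => (σ i : ℂ))) := by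
            rw [hVm1, Matrix.mul_one]
        _ = ((∑ i, σ i : ℝ) : ℂ) := by rw [Matrix.trace_diagonal]; push_cast; rfl
    rw [this, Complex.ofReal_re]
  · -- P' property
    intro P' h
    have hU0 : P' * Um = 0 := by
      rw [hUm_def, ← Matrix.mul_assoc, ← Matrix.mul_assoc, h, Matrix.zero_mul, Matrix.zero_mul]
    rw [← Matrix.mul_assoc, hU0, Matrix.zero_mul]
  · -- Q' property
    intro Q' h
    have h2 : Matrix.diagonal (fun i => (σ i : ℂ)) * (Vmᴴ * Q') = 0 := by
      calc Matrix.diagonal (fun i => (σ i : ℂ)) * (Vmᴴ * Q')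
          = (Matrix.diagonal (fun i => (σ i : ℂ)) * Vmᴴ) * Q' := by rw [Matrix.mul_assoc]
        _ = (Umᴴ * M) * Q' := by rw [UmHM]
        _ = Umᴴ * (M * Q') := by rw [Matrix.mul_assoc]
        _ = 0 := by rw [h, Matrix.mul_zero]
    have h3 : Matrix.diagonal (fun i => ((ind i : ℝ) : ℂ)) * (Vmᴴ * Q') = 0 := by
      have : Matrix.diagonal (fun i => ((ind i : ℝ) : ℂ))
          = Matrix.diagonal (fun i => (((σ i)⁻¹ : ℝ) : ℂ)) *
            Matrix.diagonal (fun i => (σ i : ℂ)) := by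
        rw [Matrix.diagonal_mul_diagonal]
        apply congrArg Matrix.diagonal
        funext i; rw [hind_def]; push_cast; ring
      rw [this, Matrix.mul_assoc, h2, Matrix.mul_zero]
    calc Um * Vmᴴ * Q' = (Um * Matrix.diagonal (fun i => ((ind i : ℝ) : ℂ))) * Vmᴴ * Q' := by
          rw [Um_ind]
      _ = Um * (Matrix.diagonal (fun i => ((ind i : ℝ) : ℂ)) * (Vmᴴ * Q')) := by
          simp only [Matrix.mul_assoc]
      _ = 0 := by rw [h3, Matrix.mul_zero]

lemma entry_eq_dot (Um : Matrix (Fin m) (Fin p) ℂ) (G : Matrix (Fin m) (Fin n) ℂ)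
    (Vm : Matrix (Fin n) (Fin p) ℂ) (i : Fin p) :
    (Umᴴ * (G * Vm)) i i
      = star (fun a => Um a i) ⬝ᵥ (G *ᵥ (fun b => Vm b i)) := by
  rw [Matrix.mul_apply, dotProduct]
  refine Finset.sum_congr rfl fun a _ => ?_
  rw [Matrix.conjTranspose_apply, Matrix.mul_apply, Matrix.mulVec, dotProduct]
  rfl

theorem re_cinner_le_spec_mul (G : Matrix (Fin m) (Fin n) ℂ) (Um : Matrix (Fin m) (Fin p) ℂ)
    (Vm : Matrix (Fin n) (Fin p) ℂ) (σ : Fin p → ℝ) (hσ : ∀ i, 0 ≤ σ i)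
    (hU : ∀ i, nsq (fun a => Um a i) ≤ 1) (hV : ∀ i, nsq (fun a => Vm a i) ≤ 1) :
    (cinner G (Um * Matrix.diagonal (fun i => (σ i : ℂ)) * Vmᴴ)).re
      ≤ specNormM' G * ∑ i, σ i := by
  set X := Um * Matrix.diagonal (fun i => (σ i : ℂ)) * Vmᴴ with hX
  have hre : (cinner G X).re = (Matrix.trace (Xᴴ * G)).re := by
    have h1 : ∀ (A B : Matrix (Fin m) (Fin n) ℂ), Aᴴ * B = (Bᴴ * A)ᴴ := by
      intro A B; rw [Matrix.conjTranspose_mul, Matrix.conjTranspose_conjTranspose]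
    rw [h1 X G, Matrix.trace_conjTranspose]
    unfold cinner
    rw [Complex.star_def, Complex.conj_re]
  rw [hre]
  have hXH : Xᴴ = Vm * Matrix.diagonal (fun i => (σ i : ℂ)) * Umᴴ := by
    rw [hX, Matrix.conjTranspose_mul, Matrix.conjTranspose_mul,
      Matrix.conjTranspose_conjTranspose, Matrix.diagonal_conjTranspose]
    have : (star fun i => ((σ i : ℝ) : ℂ)) = fun i => ((σ i : ℝ) : ℂ) := by
      funext i; simp [Pi.star_apply, Complex.star_def, Complex.conj_ofReal]
    rw [this, Matrix.mul_assoc]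
  have htr : Matrix.trace (Xᴴ * G)
      = Matrix.trace (Matrix.diagonal (fun i => (σ i : ℂ)) * (Umᴴ * (G * Vm))) := by
    rw [hXH]
    calc Matrix.trace (Vm * Matrix.diagonal (fun i => (σ i : ℂ)) * Umᴴ * G)
        = Matrix.trace (Vm * (Matrix.diagonal (fun i => (σ i : ℂ)) * (Umᴴ * G))) := by
          simp only [Matrix.mul_assoc]
      _ = Matrix.trace ((Matrix.diagonal (fun i => (σ i : ℂ)) * (Umᴴ * G)) * Vm) := by
          rw [Matrix.trace_mul_comm]
      _ = Matrix.trace (Matrix.diagonal (fun i => (σ i : ℂ)) * (Umᴴ * (G * Vm))) := by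
          simp only [Matrix.mul_assoc]
  rw [htr]
  have hdiag : Matrix.trace (Matrix.diagonal (fun i => (σ i : ℂ)) * (Umᴴ * (G * Vm)))
      = ∑ i, (σ i : ℂ) * (Umᴴ * (G * Vm)) i i := by
    unfold Matrix.trace
    refine Finset.sum_congr rfl fun i _ => ?_
    simp [Matrix.diag, Matrix.diagonal_mul]
  rw [hdiag, Complex.re_sum]
  have hbound : ∀ i : Fin p, ((σ i : ℂ) * (Umᴴ * (G * Vm)) i i).re ≤ σ i * specNormM' G := by
    intro i
    have h1 : ((σ i : ℂ) * (Umᴴ * (G * Vm)) i i).re = σ i * ((Umᴴ * (G * Vm)) i i).re := by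
      simp [Complex.mul_re]
    rw [h1]
    apply mul_le_mul_of_nonneg_left _ (hσ i)
    have h2 : ((Umᴴ * (G * Vm)) i i).re ≤ ‖(Umᴴ * (G * Vm)) i i‖ :=
      Complex.re_le_norm _
    refine h2.trans ?_
    rw [entry_eq_dot]
    have h3 := abs_dot_le (fun a => Um a i) (G *ᵥ (fun b => Vm b i))
    refine h3.trans ?_
    have hu : Real.sqrt (nsq fun a => Um a i) ≤ 1 := by
      rw [show (1:ℝ) = Real.sqrt 1 by rw [Real.sqrt_one]]
      exact Real.sqrt_le_sqrt (hU i)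
    have hv : Real.sqrt (nsq fun b => Vm b i) ≤ 1 := by
      rw [show (1:ℝ) = Real.sqrt 1 by rw [Real.sqrt_one]]
      exact Real.sqrt_le_sqrt (hV i)
    have hgv : Real.sqrt (nsq (G *ᵥ (fun b => Vm b i))) ≤ specNormM' G := by
      have := nsq_mulVec_le G (fun b => Vm b i)
      have h4 : Real.sqrt (nsq (G *ᵥ fun b => Vm b i))
          ≤ Real.sqrt (specNormM' G ^ 2 * nsq fun b => Vm b i) := Real.sqrt_le_sqrt this
      refine h4.trans ?_
      rw [Real.sqrt_mul (sq_nonneg _), Real.sqrt_sq (specNormM'_nonneg G)]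
      calc specNormM' G * Real.sqrt (nsq fun b => Vm b i) ≤ specNormM' G * 1 :=
            mul_le_mul_of_nonneg_left hv (specNormM'_nonneg G)
        _ = specNormM' G := mul_one _
    calc Real.sqrt (nsq fun a => Um a i) * Real.sqrt (nsq (G *ᵥ fun b => Vm b i))
        ≤ 1 * specNormM' G := by
          apply mul_le_mul hu hgv (Real.sqrt_nonneg _) zero_le_one
      _ = specNormM' G := one_mul _
  calc ∑ i, ((σ i : ℂ) * (Umᴴ * (G * Vm)) i i).re ≤ ∑ i, σ i * specNormM' G :=
        Finset.sum_le_sum fun i _ => hbound i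
    _ = specNormM' G * ∑ i, σ i := by rw [← Finset.sum_mul]; ring

theorem re_cinner_le_nuclear (G M : Matrix (Fin m) (Fin n) ℂ) :
    (cinner G M).re ≤ specNormM' G * nuclearNormM' M := by
  obtain ⟨Um, Vm, σ, hσ, hfac, hnuc, hU, hV, -, -, -, -⟩ := svd_exists M
  rw [hnuc]
  calc (cinner G M).re
      = (cinner G (Um * Matrix.diagonal (fun i => (σ i : ℂ)) * Vmᴴ)).re := by rw [← hfac]
    _ ≤ specNormM' G * ∑ i, σ i := re_cinner_le_spec_mul G Um Vm σ hσ hU hV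

theorem dualCert (M : Matrix (Fin m) (Fin n) ℂ) :
    ∃ B : Matrix (Fin m) (Fin n) ℂ, specNormM' B ≤ 1 ∧ (cinner B M).re = nuclearNormM' M ∧
      (∀ P' : Matrix (Fin m) (Fin m) ℂ, P' * M = 0 → P' * B = 0) ∧
      (∀ Q' : Matrix (Fin n) (Fin n) ℂ, M * Q' = 0 → B * Q' = 0) := by
  obtain ⟨Um, Vm, σ, hσ, hfac, hnuc, hU, hV, hspec, hval, hP, hQ⟩ := svd_exists M
  exact ⟨Um * Vmᴴ, hspec, by rw [hval, hnuc], hP, hQ⟩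

theorem nuclear_le_of_skinny {r : ℕ} (Um : Matrix (Fin m) (Fin r) ℂ)
    (Vm : Matrix (Fin n) (Fin r) ℂ) (d : Fin r → ℝ) (hd : ∀ i, 0 ≤ d i)
    (hU : Umᴴ * Um = 1) (hV : Vmᴴ * Vm = 1) :
    nuclearNormM' (Um * Matrix.diagonal (fun i => (d i : ℂ)) * Vmᴴ) ≤ ∑ i, d i := by
  set M := Um * Matrix.diagonal (fun i => (d i : ℂ)) * Vmᴴ with hM
  obtain ⟨B, hB1, hB2, -, -⟩ := dualCert M
  have hcolU : ∀ i, nsq (fun a => Um a i) ≤ 1 := by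
    intro i
    have h1 : (Umᴴ * Um) i i = (1 : Matrix (Fin r) (Fin r) ℂ) i i := congrArg (fun X => X i i) hU
    rw [col_nsq, Matrix.one_apply_eq] at h1
    have : nsq (fun a => Um a i) = 1 := by exact_mod_cast h1
    rw [this]
  have hcolV : ∀ i, nsq (fun a => Vm a i) ≤ 1 := by
    intro i
    have h1 : (Vmᴴ * Vm) i i = (1 : Matrix (Fin r) (Fin r) ℂ) i i := congrArg (fun X => X i i) hV
    rw [col_nsq, Matrix.one_apply_eq] at h1
    have : nsq (fun a => Vm a i) = 1 := by exact_mod_cast h1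
    rw [this]
  have h3 := re_cinner_le_spec_mul B Um Vm d hd hcolU hcolV
  rw [← hM] at h3
  rw [← hB2]
  refine h3.trans ?_
  have hsum : 0 ≤ ∑ i, d i := Finset.sum_nonneg fun i _ => hd i
  calc specNormM' B * ∑ i, d i ≤ 1 * ∑ i, d i := mul_le_mul_of_nonneg_right hB1 hsum
    _ = ∑ i, d i := one_mul _

lemma nsq_neg (v : Fin n → ℂ) : nsq (-v) = nsq v := by
  unfold nsq; simp

theorem spec_UV_add_B {r : ℕ} (U : Matrix (Fin m) (Fin r) ℂ) (V : Matrix (Fin n) (Fin r) ℂ)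
    (B : Matrix (Fin m) (Fin n) ℂ) (hU : Uᴴ * U = 1) (hV : Vᴴ * V = 1)
    (hB : specNormM' B ≤ 1) (hPB : (U * Uᴴ) * B = 0) (hBQ : B * (V * Vᴴ) = 0) :
    specNormM' (U * Vᴴ + B) ≤ 1 := by
  have hUB : Uᴴ * B = 0 := by
    have h1 : U * (Uᴴ * B) = 0 := by rw [← Matrix.mul_assoc, hPB]
    have h2 : (Uᴴ * U) * (Uᴴ * B) = 0 := by rw [Matrix.mul_assoc, h1, Matrix.mul_zero]
    rwa [hU, Matrix.one_mul] at h2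
  set Q := V * Vᴴ with hQdef
  have hQH : Qᴴ = Q := by
    rw [hQdef, Matrix.conjTranspose_mul, Matrix.conjTranspose_conjTranspose]
  have hQQ : Q * Q = Q := by
    rw [hQdef]
    calc V * Vᴴ * (V * Vᴴ) = V * ((Vᴴ * V) * Vᴴ) := by simp only [Matrix.mul_assoc]
      _ = V * Vᴴ := by rw [hV, Matrix.one_mul]
  apply specNormM'_le zero_le_one
  intro v
  rw [one_pow, one_mul, Matrix.add_mulVec]
  set a := (U * Vᴴ) *ᵥ v with ha
  set b := B *ᵥ v with hb
  set tq : ℝ := (star v ⬝ᵥ (Q *ᵥ v)).re with htq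
  have hcross : star a ⬝ᵥ b = 0 := by
    rw [ha, hb, dot_mulVec_mulVec]
    have : (U * Vᴴ)ᴴ * B = 0 := by
      rw [Matrix.conjTranspose_mul, Matrix.conjTranspose_conjTranspose, Matrix.mul_assoc,
        hUB, Matrix.mul_zero]
    rw [this, Matrix.zero_mulVec, dotProduct_zero]
  have hnsqa : nsq a = tq := by
    rw [ha, nsq_mulVec]
    have : (U * Vᴴ)ᴴ * (U * Vᴴ) = Q := by
      rw [Matrix.conjTranspose_mul, Matrix.conjTranspose_conjTranspose]
      calc V * Uᴴ * (U * Vᴴ) = V * ((Uᴴ * U) * Vᴴ) := by simp only [Matrix.mul_assoc]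
        _ = V * Vᴴ := by rw [hU, Matrix.one_mul]
    rw [this, htq]
  have hb2 : b = B *ᵥ (v - Q *ᵥ v) := by
    rw [Matrix.mulVec_sub, Matrix.mulVec_mulVec, hBQ, Matrix.zero_mulVec, sub_zero, hb]
  have hnsqQv : nsq (Q *ᵥ v) = tq := by
    rw [nsq_mulVec, hQH, hQQ, htq]
  have hnsqw : nsq (v - Q *ᵥ v) = nsq v - tq := by
    have h1 : v - Q *ᵥ v = v + -(Q *ᵥ v) := by ring
    rw [h1, nsq_add, nsq_neg, hnsqQv, dotProduct_neg]
    simp only [Complex.neg_re]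
    rw [htq]
    ring
  have hnsqb : nsq b ≤ nsq v - tq := by
    rw [hb2, ← hnsqw]
    have h1 := nsq_mulVec_le B (v - Q *ᵥ v)
    refine h1.trans ?_
    have h2 : specNormM' B ^ 2 ≤ 1 := by
      have := specNormM'_nonneg B
      nlinarith
    nlinarith [nsq_nonneg (v - Q *ᵥ v)]
  calc nsq (a + b) = nsq a + nsq b + 2 * (star a ⬝ᵥ b).re := nsq_add a b
    _ = tq + nsq b := by rw [hnsqa, hcross]; simp
    _ ≤ tq + (nsq v - tq) := by linarith
    _ = nsq v := by ring


section TensorLayer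
open Tensor

variable {n1 n2 n3 n4 r : ℕ}

lemma spec_eq {m n : ℕ} (M : Matrix (Fin m) (Fin n) ℂ) :
    Tensor.specNormM M = specNormM' M := rfl

lemma nuc_eq {m n : ℕ} (M : Matrix (Fin m) (Fin n) ℂ) :
    Tensor.nuclearNormM M = nuclearNormM' M := rfl

lemma slice_apply (Φ : Matrix (Fin n3) (Fin n3) ℂ) (A : Tensor n1 n2 n3) (t : Fin n3)
    (i : Fin n1) (j : Fin n2) : Tensor.slice Φ A t i j = ∑ k, Φ t k * A i j k := rfl

lemma slice_add (Φ : Matrix (Fin n3) (Fin n3) ℂ) (A B : Tensor n1 n2 n3) (t : Fin n3) :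
    Tensor.slice Φ (A + B) t = Tensor.slice Φ A t + Tensor.slice Φ B t := by
  ext i j
  simp only [Matrix.add_apply, slice_apply, Pi.add_apply, mul_add, Finset.sum_add_distrib]

lemma slice_sub (Φ : Matrix (Fin n3) (Fin n3) ℂ) (A B : Tensor n1 n2 n3) (t : Fin n3) :
    Tensor.slice Φ (A - B) t = Tensor.slice Φ A t - Tensor.slice Φ B t := by
  ext i j
  simp only [Matrix.sub_apply, slice_apply, Pi.sub_apply, mul_sub, Finset.sum_sub_distrib]

lemma unitary_sum2 {Φ : Matrix (Fin n3) (Fin n3) ℂ} (h2 : Φ * Φᴴ = 1)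
    (x : Fin n3 → ℂ) (t : Fin n3) :
    ∑ k, Φ t k * (∑ s, (starRingEnd ℂ) (Φ s k) * x s) = x t := by
  have expand : ∀ k, Φ t k * (∑ s, (starRingEnd ℂ) (Φ s k) * x s)
      = ∑ s, (Φ t k * (starRingEnd ℂ) (Φ s k)) * x s := by
    intro k
    rw [Finset.mul_sum]
    exact Finset.sum_congr rfl fun s _ => by ring
  simp_rw [expand]
  rw [Finset.sum_comm]
  have hcol : ∀ s, (∑ k, (Φ t k * (starRingEnd ℂ) (Φ s k)) * x s)
      = ((1 : Matrix (Fin n3) (Fin n3) ℂ) t s) * x s := by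
    intro s
    rw [← Finset.sum_mul, ← h2, Matrix.mul_apply]
    congr 1
  simp_rw [hcol]
  simp [Matrix.one_apply, ite_mul]

lemma slice_unslice {Φ : Matrix (Fin n3) (Fin n3) ℂ} (h2 : Φ * Φᴴ = 1)
    (N : Fin n3 → Matrix (Fin n1) (Fin n2) ℂ) (t : Fin n3) :
    Tensor.slice Φ (Tensor.unslice Φ N) t = N t := by
  ext i j
  show ∑ k, Φ t k * (∑ s, (starRingEnd ℂ) (Φ s k) * N s i j) = N t i j
  exact unitary_sum2 h2 (fun s => N s i j) t

lemma slice_tprod {Φ : Matrix (Fin n3) (Fin n3) ℂ} (h2 : Φ * Φᴴ = 1)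
    (A : Tensor n1 n2 n3) (B : Tensor n2 n4 n3) (t : Fin n3) :
    Tensor.slice Φ (Tensor.tprod Φ A B) t = Tensor.slice Φ A t * Tensor.slice Φ B t := by
  unfold Tensor.tprod
  rw [slice_unslice h2]

lemma slice_tconj {Φ : Matrix (Fin n3) (Fin n3) ℂ} (h2 : Φ * Φᴴ = 1)
    (A : Tensor n1 n2 n3) (t : Fin n3) :
    Tensor.slice Φ (Tensor.tconj Φ A) t = (Tensor.slice Φ A t)ᴴ := by
  unfold Tensor.tconj
  rw [slice_unslice h2]

lemma unitary_sum1 {Φ : Matrix (Fin n3) (Fin n3) ℂ} (h1 : Φᴴ * Φ = 1)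
    (x y : Fin n3 → ℂ) :
    ∑ t, (starRingEnd ℂ) (∑ k, Φ t k * x k) * (∑ l, Φ t l * y l)
      = ∑ k, (starRingEnd ℂ) (x k) * y k := by
  have expand : ∀ t, (starRingEnd ℂ) (∑ k, Φ t k * x k) * (∑ l, Φ t l * y l)
      = ∑ k, ∑ l, ((starRingEnd ℂ) (Φ t k) * Φ t l) * ((starRingEnd ℂ) (x k) * y l) := by
    intro t
    rw [_root_.map_sum, Finset.sum_mul]
    refine Finset.sum_congr rfl fun k _ => ?_
    rw [Finset.mul_sum]
    refine Finset.sum_congr rfl fun l _ => ?_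
    rw [_root_.map_mul]
    ring
  simp_rw [expand]
  rw [Finset.sum_comm]
  have inner_swap : ∀ k, ∑ t, ∑ l, ((starRingEnd ℂ) (Φ t k) * Φ t l)
        * ((starRingEnd ℂ) (x k) * y l)
      = ∑ l, ((1 : Matrix (Fin n3) (Fin n3) ℂ) k l) * ((starRingEnd ℂ) (x k) * y l) := by
    intro k
    rw [Finset.sum_comm]
    refine Finset.sum_congr rfl fun l _ => ?_
    rw [← Finset.sum_mul, ← h1, Matrix.mul_apply]
    congr 1
  simp_rw [inner_swap]
  refine Finset.sum_congr rfl fun k _ => ?_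
  simp [Matrix.one_apply, ite_mul]

lemma tinner_eq_sum_cinner {Φ : Matrix (Fin n3) (Fin n3) ℂ} (h1 : Φᴴ * Φ = 1)
    (A B : Tensor n1 n2 n3) :
    Tensor.tinner A B = ∑ t, cinner (Tensor.slice Φ A t) (Tensor.slice Φ B t) := by
  have expand : ∑ t, cinner (Tensor.slice Φ A t) (Tensor.slice Φ B t)
      = ∑ i, ∑ j, ∑ t, (starRingEnd ℂ) (Tensor.slice Φ A t i j) * Tensor.slice Φ B t i j := by
    simp_rw [cinner_eq_sum]
    rw [Finset.sum_comm]
    refine Finset.sum_congr rfl fun i _ => ?_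
    exact Finset.sum_comm
  rw [expand]
  unfold Tensor.tinner
  refine Finset.sum_congr rfl fun i _ => Finset.sum_congr rfl fun j _ => ?_
  exact (unitary_sum1 h1 (fun k => A i j k) (fun k => B i j k)).symm

lemma frob_nonneg (A : Tensor n1 n2 n3) : 0 ≤ Tensor.frob A := Real.sqrt_nonneg _

lemma frob_sub_comm (A B : Tensor n1 n2 n3) : Tensor.frob (A - B) = Tensor.frob (B - A) := by
  unfold Tensor.frob
  congr 1
  refine Finset.sum_congr rfl fun i _ => ?_
  refine Finset.sum_congr rfl fun j _ => ?_
  refine Finset.sum_congr rfl fun k _ => ?_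
  show Complex.normSq ((A - B) i j k) = Complex.normSq ((B - A) i j k)
  rw [← Complex.normSq_neg]
  congr 1
  simp [Pi.sub_apply]

def flat (A : Tensor n1 n2 n3) : EuclideanSpace ℂ (Fin n1 × Fin n2 × Fin n3) :=
  (WithLp.equiv 2 _).symm (fun p => A p.1 p.2.1 p.2.2)

lemma norm_flat (A : Tensor n1 n2 n3) : ‖flat A‖ = Tensor.frob A := by
  rw [EuclideanSpace.norm_eq]
  unfold Tensor.frob
  congr 1
  rw [Fintype.sum_prod_type]
  refine Finset.sum_congr rfl fun i _ => ?_
  rw [Fintype.sum_prod_type]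
  refine Finset.sum_congr rfl fun j _ => ?_
  refine Finset.sum_congr rfl fun k _ => ?_
  simp only [Complex.normSq_eq_norm_sq]
  rfl

lemma inner_flat (A B : Tensor n1 n2 n3) :
    (inner ℂ (flat A) (flat B) : ℂ) = Tensor.tinner A B := by
  rw [PiLp.inner_apply]
  unfold Tensor.tinner
  rw [Fintype.sum_prod_type]
  refine Finset.sum_congr rfl fun i _ => ?_
  rw [Fintype.sum_prod_type]
  refine Finset.sum_congr rfl fun j _ => ?_
  refine Finset.sum_congr rfl fun k _ => ?_
  rw [RCLike.inner_apply']
  rfl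

lemma abs_re_tinner_le (A B : Tensor n1 n2 n3) : |(Tensor.tinner A B).re| ≤ Tensor.frob A * Tensor.frob B := by
  have h1 := norm_inner_le_norm (𝕜 := ℂ) (flat A) (flat B)
  rw [norm_flat, norm_flat, inner_flat] at h1
  exact (Complex.abs_re_le_norm _).trans h1

lemma proj_decomp {a b : ℕ} (P : Matrix (Fin a) (Fin a) ℂ) (Q : Matrix (Fin b) (Fin b) ℂ)
    (X : Matrix (Fin a) (Fin b) ℂ) :
    P * X + X * Q - P * X * Q = X - (1 - P) * X * (1 - Q) := by
  simp only [Matrix.sub_mul, Matrix.mul_sub, Matrix.one_mul, Matrix.mul_one]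
  abel

lemma slice_projT {Φ : Matrix (Fin n3) (Fin n3) ℂ} (h2 : Φ * Φᴴ = 1)
    (U : Tensor n1 r n3) (V : Tensor n2 r n3) (X : Tensor n1 n2 n3) (t : Fin n3) :
    Tensor.slice Φ (Tensor.projT Φ U V X) t
      = Tensor.slice Φ X t - (1 - Tensor.slice Φ U t * (Tensor.slice Φ U t)ᴴ) * Tensor.slice Φ X t
          * (1 - Tensor.slice Φ V t * (Tensor.slice Φ V t)ᴴ) := by
  unfold Tensor.projT
  rw [slice_sub, slice_add]
  simp only [slice_tprod h2, slice_tconj h2]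
  exact proj_decomp _ _ _

lemma slice_projTperp {Φ : Matrix (Fin n3) (Fin n3) ℂ} (h2 : Φ * Φᴴ = 1)
    (U : Tensor n1 r n3) (V : Tensor n2 r n3) (X : Tensor n1 n2 n3) (t : Fin n3) :
    Tensor.slice Φ (Tensor.projTperp Φ U V X) t
      = (1 - Tensor.slice Φ U t * (Tensor.slice Φ U t)ᴴ) * Tensor.slice Φ X t
          * (1 - Tensor.slice Φ V t * (Tensor.slice Φ V t)ᴴ) := by
  unfold Tensor.projTperp
  rw [slice_sub, slice_projT h2, sub_sub_cancel]

lemma tinner_disjoint {Ω : Set (Fin n1 × Fin n2 × Fin n3)} {Y W : Tensor n1 n2 n3}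
    (hY : Tensor.projOmega Ω Y = Y) (hW : Tensor.projOmega Ω W = 0) : Tensor.tinner Y W = 0 := by
  unfold Tensor.tinner
  refine Finset.sum_eq_zero fun i _ => Finset.sum_eq_zero fun j _ => Finset.sum_eq_zero fun k _ => ?_
  by_cases hmem : (i, j, k) ∈ Ω
  · have h1 := congrFun (congrFun (congrFun hW i) j) k
    unfold Tensor.projOmega at h1
    rw [Set.indicator_of_mem hmem] at h1
    simp only [Pi.zero_apply] at h1
    rw [h1, mul_zero]
  · have h1 := congrFun (congrFun (congrFun hY i) j) k
    unfold Tensor.projOmega at h1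
    rw [Set.indicator_of_notMem hmem] at h1
    rw [← h1, _root_.map_zero, zero_mul]

end TensorLayer
end S9


/-- lower bound on ‖Z + W‖_TTNN via a dual certificate. -/
theorem statement9 {n1 n2 n3 r : ℕ} (Φ : Matrix (Fin n3) (Fin n3) ℂ)
    (hΦ : Φ ∈ Matrix.unitaryGroup (Fin n3) ℂ)
    (Z : Tensor n1 n2 n3) (U : Tensor n1 r n3) (S : Tensor r r n3) (V : Tensor n2 r n3)
    (hSVD : SkinnySVD Φ Z r U S V)
    (Ω : Set (Fin n1 × Fin n2 × Fin n3)) (Y : Tensor n1 n2 n3)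
    (hYsupp : projOmega Ω Y = Y)
    (hY1 : frob (projT Φ U V Y - tprod Φ U (tconj Φ V)) ≤ 1 / (4 * (max n1 n2 : ℝ) * n3))
    (hY2 : specNorm Φ (projTperp Φ U V Y) ≤ 1 / 2) :
    ∀ W : Tensor n1 n2 n3, projOmega Ω W = 0 →
      ttnn Φ (Z + W) ≥ ttnn Φ Z + (1 / 2) * ttnn Φ (projTperp Φ U V W)
        - (1 / (4 * (max n1 n2 : ℝ) * n3)) * frob (projT Φ U V W) := by
  intro W hW
  have hΦ2 : Φ * Φᴴ = 1 := by
    rw [← Matrix.star_eq_conjTranspose]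
    exact (Matrix.mem_unitaryGroup_iff).mp hΦ
  have hΦ1 : Φᴴ * Φ = 1 := by
    rw [← Matrix.star_eq_conjTranspose]
    exact (Matrix.mem_unitaryGroup_iff').mp hΦ
  set c : ℝ := 1 / (4 * (max n1 n2 : ℝ) * n3) with hc
  have hUo : ∀ t, (Tensor.slice Φ U t)ᴴ * Tensor.slice Φ U t = 1 := hSVD.U_orth
  have hVo : ∀ t, (Tensor.slice Φ V t)ᴴ * Tensor.slice Φ V t = 1 := hSVD.V_orth
  have hPmH : ∀ t, (Tensor.slice Φ U t * (Tensor.slice Φ U t)ᴴ)ᴴ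
      = Tensor.slice Φ U t * (Tensor.slice Φ U t)ᴴ := by
    intro t; rw [Matrix.conjTranspose_mul, Matrix.conjTranspose_conjTranspose]
  have hQmH : ∀ t, (Tensor.slice Φ V t * (Tensor.slice Φ V t)ᴴ)ᴴ
      = Tensor.slice Φ V t * (Tensor.slice Φ V t)ᴴ := by
    intro t; rw [Matrix.conjTranspose_mul, Matrix.conjTranspose_conjTranspose]
  have hPmI : ∀ t, (Tensor.slice Φ U t * (Tensor.slice Φ U t)ᴴ)
      * (Tensor.slice Φ U t * (Tensor.slice Φ U t)ᴴ)
      = Tensor.slice Φ U t * (Tensor.slice Φ U t)ᴴ := by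
    intro t
    calc Tensor.slice Φ U t * (Tensor.slice Φ U t)ᴴ
          * (Tensor.slice Φ U t * (Tensor.slice Φ U t)ᴴ)
        = Tensor.slice Φ U t * (((Tensor.slice Φ U t)ᴴ * Tensor.slice Φ U t)
            * (Tensor.slice Φ U t)ᴴ) := by simp only [Matrix.mul_assoc]
      _ = Tensor.slice Φ U t * (Tensor.slice Φ U t)ᴴ := by rw [hUo t, Matrix.one_mul]
  have hQmI : ∀ t, (Tensor.slice Φ V t * (Tensor.slice Φ V t)ᴴ)
      * (Tensor.slice Φ V t * (Tensor.slice Φ V t)ᴴ)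
      = Tensor.slice Φ V t * (Tensor.slice Φ V t)ᴴ := by
    intro t
    calc Tensor.slice Φ V t * (Tensor.slice Φ V t)ᴴ
          * (Tensor.slice Φ V t * (Tensor.slice Φ V t)ᴴ)
        = Tensor.slice Φ V t * (((Tensor.slice Φ V t)ᴴ * Tensor.slice Φ V t)
            * (Tensor.slice Φ V t)ᴴ) := by simp only [Matrix.mul_assoc]
      _ = Tensor.slice Φ V t * (Tensor.slice Φ V t)ᴴ := by rw [hVo t, Matrix.one_mul]
  set d : Fin n3 → Fin r → ℝ := fun t i => (Tensor.slice Φ S t i i).re with hd_def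
  have hd : ∀ t i, 0 ≤ d t i := fun t i => (hSVD.S_diag_real_nonneg t i).2
  have hSd : ∀ t, Tensor.slice Φ S t = Matrix.diagonal (fun i => ((d t i : ℝ) : ℂ)) := by
    intro t; ext i j
    by_cases hij : i = j
    · subst hij
      rw [Matrix.diagonal_apply_eq]
      have him := (hSVD.S_diag_real_nonneg t i).1
      apply Complex.ext
      · simp [hd_def]
      · simp [him]
    · rw [Matrix.diagonal_apply_ne _ hij]
      exact hSVD.S_offdiag t i j hij
  have sZ : ∀ t, Tensor.slice Φ Z t
      = Tensor.slice Φ U t * Matrix.diagonal (fun i => ((d t i : ℝ) : ℂ))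
          * (Tensor.slice Φ V t)ᴴ := by
    intro t
    rw [hSVD.factor, S9.slice_tprod hΦ2, S9.slice_tprod hΦ2, S9.slice_tconj hΦ2, hSd t]
  have sWp : ∀ t, Tensor.slice Φ (projTperp Φ U V W) t
      = (1 - Tensor.slice Φ U t * (Tensor.slice Φ U t)ᴴ) * Tensor.slice Φ W t
          * (1 - Tensor.slice Φ V t * (Tensor.slice Φ V t)ᴴ) :=
    fun t => S9.slice_projTperp hΦ2 U V W t
  have sWT : ∀ t, Tensor.slice Φ (projT Φ U V W) t
      = Tensor.slice Φ W t
        - (1 - Tensor.slice Φ U t * (Tensor.slice Φ U t)ᴴ) * Tensor.slice Φ W t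
          * (1 - Tensor.slice Φ V t * (Tensor.slice Φ V t)ᴴ) :=
    fun t => S9.slice_projT hΦ2 U V W t
  have sYp : ∀ t, Tensor.slice Φ (projTperp Φ U V Y) t
      = (1 - Tensor.slice Φ U t * (Tensor.slice Φ U t)ᴴ) * Tensor.slice Φ Y t
          * (1 - Tensor.slice Φ V t * (Tensor.slice Φ V t)ᴴ) :=
    fun t => S9.slice_projTperp hΦ2 U V Y t
  have sYT : ∀ t, Tensor.slice Φ (projT Φ U V Y) t
      = Tensor.slice Φ Y t
        - (1 - Tensor.slice Φ U t * (Tensor.slice Φ U t)ᴴ) * Tensor.slice Φ Y t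
          * (1 - Tensor.slice Φ V t * (Tensor.slice Φ V t)ᴴ) :=
    fun t => S9.slice_projT hΦ2 U V Y t
  have hcert := fun t => S9.dualCert (Tensor.slice Φ (projTperp Φ U V W) t)
  choose B hB1 hB2 hB3 hB4 using hcert
  have hPm0 : ∀ t, (Tensor.slice Φ U t * (Tensor.slice Φ U t)ᴴ)
      * (1 - Tensor.slice Φ U t * (Tensor.slice Φ U t)ᴴ) = 0 := by
    intro t; rw [Matrix.mul_sub, Matrix.mul_one, hPmI t, sub_self]
  have hQm0 : ∀ t, (1 - Tensor.slice Φ V t * (Tensor.slice Φ V t)ᴴ)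
      * (Tensor.slice Φ V t * (Tensor.slice Φ V t)ᴴ) = 0 := by
    intro t; rw [Matrix.sub_mul, Matrix.one_mul, hQmI t, sub_self]
  have hPmB : ∀ t, (Tensor.slice Φ U t * (Tensor.slice Φ U t)ᴴ) * B t = 0 := by
    intro t
    apply hB3 t
    rw [sWp t]
    have h1 : (Tensor.slice Φ U t * (Tensor.slice Φ U t)ᴴ)
        * ((1 - Tensor.slice Φ U t * (Tensor.slice Φ U t)ᴴ) * Tensor.slice Φ W t
          * (1 - Tensor.slice Φ V t * (Tensor.slice Φ V t)ᴴ))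
        = ((Tensor.slice Φ U t * (Tensor.slice Φ U t)ᴴ)
            * (1 - Tensor.slice Φ U t * (Tensor.slice Φ U t)ᴴ))
          * (Tensor.slice Φ W t * (1 - Tensor.slice Φ V t * (Tensor.slice Φ V t)ᴴ)) := by
      simp only [Matrix.mul_assoc]
    rw [h1, hPm0 t, Matrix.zero_mul]
  have hBQm : ∀ t, B t * (Tensor.slice Φ V t * (Tensor.slice Φ V t)ᴴ) = 0 := by
    intro t
    apply hB4 t
    rw [sWp t]
    have h1 : (1 - Tensor.slice Φ U t * (Tensor.slice Φ U t)ᴴ) * Tensor.slice Φ W t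
          * (1 - Tensor.slice Φ V t * (Tensor.slice Φ V t)ᴴ)
          * (Tensor.slice Φ V t * (Tensor.slice Φ V t)ᴴ)
        = ((1 - Tensor.slice Φ U t * (Tensor.slice Φ U t)ᴴ) * Tensor.slice Φ W t)
          * ((1 - Tensor.slice Φ V t * (Tensor.slice Φ V t)ᴴ)
            * (Tensor.slice Φ V t * (Tensor.slice Φ V t)ᴴ)) := by
      simp only [Matrix.mul_assoc]
    rw [h1, hQm0 t, Matrix.mul_zero]
  have hG : ∀ t, S9.specNormM' (Tensor.slice Φ U t * (Tensor.slice Φ V t)ᴴ + B t) ≤ 1 :=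
    fun t => S9.spec_UV_add_B _ _ _ (hUo t) (hVo t) (hB1 t) (hPmB t) (hBQm t)
  have hUB : ∀ t, (Tensor.slice Φ U t)ᴴ * B t = 0 := by
    intro t
    have h1 : Tensor.slice Φ U t * ((Tensor.slice Φ U t)ᴴ * B t) = 0 := by
      rw [← Matrix.mul_assoc]; exact hPmB t
    have h2 := congrArg (fun X => (Tensor.slice Φ U t)ᴴ * X) h1
    simp only [Matrix.mul_zero] at h2
    rwa [← Matrix.mul_assoc, hUo t, Matrix.one_mul] at h2
  have step1 : ∀ t, (S9.cinner (Tensor.slice Φ U t * (Tensor.slice Φ V t)ᴴ + B t)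
      (Tensor.slice Φ (Z + W) t)).re ≤ S9.nuclearNormM' (Tensor.slice Φ (Z + W) t) := by
    intro t
    refine (S9.re_cinner_le_nuclear _ _).trans ?_
    calc S9.specNormM' (Tensor.slice Φ U t * (Tensor.slice Φ V t)ᴴ + B t)
          * S9.nuclearNormM' (Tensor.slice Φ (Z + W) t)
        ≤ 1 * S9.nuclearNormM' (Tensor.slice Φ (Z + W) t) :=
          mul_le_mul_of_nonneg_right (hG t) (S9.nuclearNormM'_nonneg _)
      _ = S9.nuclearNormM' (Tensor.slice Φ (Z + W) t) := one_mul _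
  have step2 : ∀ t, (S9.cinner (Tensor.slice Φ U t * (Tensor.slice Φ V t)ᴴ + B t)
      (Tensor.slice Φ Z t)).re = ∑ i, d t i := by
    intro t
    rw [S9.cinner_add_left]
    have hBZ : S9.cinner (B t) (Tensor.slice Φ Z t) = 0 := by
      unfold S9.cinner
      rw [sZ t]
      have hBU : (B t)ᴴ * Tensor.slice Φ U t = 0 := by
        have h1 := congrArg Matrix.conjTranspose (hUB t)
        rw [Matrix.conjTranspose_mul, Matrix.conjTranspose_conjTranspose] at h1
        simpa using h1
      have h2 : (B t)ᴴ * (Tensor.slice Φ U t * Matrix.diagonal (fun i => ((d t i : ℝ) : ℂ))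
            * (Tensor.slice Φ V t)ᴴ)
          = ((B t)ᴴ * Tensor.slice Φ U t) * (Matrix.diagonal (fun i => ((d t i : ℝ) : ℂ))
            * (Tensor.slice Φ V t)ᴴ) := by simp only [Matrix.mul_assoc]
      rw [h2, hBU, Matrix.zero_mul, Matrix.trace_zero]
    have hUVZ : S9.cinner (Tensor.slice Φ U t * (Tensor.slice Φ V t)ᴴ)
        (Tensor.slice Φ Z t) = ((∑ i, d t i : ℝ) : ℂ) := by
      unfold S9.cinner
      rw [sZ t, Matrix.conjTranspose_mul, Matrix.conjTranspose_conjTranspose]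
      calc Matrix.trace (Tensor.slice Φ V t * (Tensor.slice Φ U t)ᴴ
            * (Tensor.slice Φ U t * Matrix.diagonal (fun i => ((d t i : ℝ) : ℂ))
              * (Tensor.slice Φ V t)ᴴ))
          = Matrix.trace (Tensor.slice Φ V t * (((Tensor.slice Φ U t)ᴴ * Tensor.slice Φ U t)
              * (Matrix.diagonal (fun i => ((d t i : ℝ) : ℂ)) * (Tensor.slice Φ V t)ᴴ))) := by
            simp only [Matrix.mul_assoc]
        _ = Matrix.trace (Tensor.slice Φ V t
              * (Matrix.diagonal (fun i => ((d t i : ℝ) : ℂ)) * (Tensor.slice Φ V t)ᴴ)) := by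
            rw [hUo t, Matrix.one_mul]
        _ = Matrix.trace ((Matrix.diagonal (fun i => ((d t i : ℝ) : ℂ))
              * (Tensor.slice Φ V t)ᴴ) * Tensor.slice Φ V t) := Matrix.trace_mul_comm _ _
        _ = Matrix.trace (Matrix.diagonal (fun i => ((d t i : ℝ) : ℂ))
              * ((Tensor.slice Φ V t)ᴴ * Tensor.slice Φ V t)) := by
            simp only [Matrix.mul_assoc]
        _ = Matrix.trace (Matrix.diagonal (fun i => ((d t i : ℝ) : ℂ))) := by
            rw [hVo t, Matrix.mul_one]
        _ = ((∑ i, d t i : ℝ) : ℂ) := by rw [Matrix.trace_diagonal]; push_cast; rfl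
    rw [Complex.add_re, hBZ, hUVZ]
    simp
  have step3 : ∀ t, S9.nuclearNormM' (Tensor.slice Φ Z t) ≤ ∑ i, d t i := by
    intro t
    rw [sZ t]
    exact S9.nuclear_le_of_skinny _ _ _ (hd t) (hUo t) (hVo t)
  have hBfix : ∀ t, (1 - Tensor.slice Φ U t * (Tensor.slice Φ U t)ᴴ) * B t
      * (1 - Tensor.slice Φ V t * (Tensor.slice Φ V t)ᴴ) = B t := by
    intro t
    rw [Matrix.sub_mul, Matrix.one_mul, hPmB t, sub_zero, Matrix.mul_sub, Matrix.mul_one,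
      hBQm t, sub_zero]
  have h4a : ∀ t, S9.cinner (B t) (Tensor.slice Φ (projT Φ U V W) t) = 0 := by
    intro t
    rw [sWT t, ← hBfix t]
    exact S9.cinner_perp_proj (hPmH t) (hQmH t) (hPmI t) (hQmI t) _ _
  have hUV0 : ∀ t, (1 - Tensor.slice Φ U t * (Tensor.slice Φ U t)ᴴ)
      * (Tensor.slice Φ U t * (Tensor.slice Φ V t)ᴴ)
      * (1 - Tensor.slice Φ V t * (Tensor.slice Φ V t)ᴴ) = 0 := by
    intro t
    have h1 : (1 - Tensor.slice Φ U t * (Tensor.slice Φ U t)ᴴ) * Tensor.slice Φ U t = 0 := by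
      rw [Matrix.sub_mul, Matrix.one_mul]
      have h2 : Tensor.slice Φ U t * (Tensor.slice Φ U t)ᴴ * Tensor.slice Φ U t
          = Tensor.slice Φ U t := by
        rw [Matrix.mul_assoc, hUo t, Matrix.mul_one]
      rw [h2, sub_self]
    have h3 : (1 - Tensor.slice Φ U t * (Tensor.slice Φ U t)ᴴ)
        * (Tensor.slice Φ U t * (Tensor.slice Φ V t)ᴴ)
        = ((1 - Tensor.slice Φ U t * (Tensor.slice Φ U t)ᴴ) * Tensor.slice Φ U t)
          * (Tensor.slice Φ V t)ᴴ := by simp only [Matrix.mul_assoc]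
    rw [h3, h1, Matrix.zero_mul, Matrix.zero_mul]
  have h4b : ∀ t, S9.cinner (Tensor.slice Φ U t * (Tensor.slice Φ V t)ᴴ)
      (Tensor.slice Φ (projTperp Φ U V W) t) = 0 := by
    intro t
    have h1 := S9.cinner_proj_perp (hPmH t) (hQmH t) (hPmI t) (hQmI t)
      (Tensor.slice Φ U t * (Tensor.slice Φ V t)ᴴ) (Tensor.slice Φ W t)
    rw [hUV0 t, sub_zero] at h1
    rw [sWp t]
    exact h1
  have hcross1 : ∀ t, S9.cinner (Tensor.slice Φ (projT Φ U V Y) t)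
      (Tensor.slice Φ (projTperp Φ U V W) t) = 0 := by
    intro t
    rw [sYT t, sWp t]
    exact S9.cinner_proj_perp (hPmH t) (hQmH t) (hPmI t) (hQmI t) _ _
  have hcross2 : ∀ t, S9.cinner (Tensor.slice Φ (projTperp Φ U V Y) t)
      (Tensor.slice Φ (projT Φ U V W) t) = 0 := by
    intro t
    rw [sYp t, sWT t]
    exact S9.cinner_perp_proj (hPmH t) (hQmH t) (hPmI t) (hQmI t) _ _
  have hWdec : ∀ t, Tensor.slice Φ W t
      = Tensor.slice Φ (projT Φ U V W) t + Tensor.slice Φ (projTperp Φ U V W) t := by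
    intro t; rw [sWT t, sWp t]; abel
  have hYdec : ∀ t, Tensor.slice Φ Y t
      = Tensor.slice Φ (projT Φ U V Y) t + Tensor.slice Φ (projTperp Φ U V Y) t := by
    intro t; rw [sYT t, sYp t]; abel
  have hsumYW : ∑ t, (S9.cinner (Tensor.slice Φ Y t) (Tensor.slice Φ W t)).re = 0 := by
    have h1 := S9.tinner_eq_sum_cinner hΦ1 Y W
    rw [S9.tinner_disjoint hYsupp hW] at h1
    have h2 : (∑ t, S9.cinner (Tensor.slice Φ Y t) (Tensor.slice Φ W t)).re = (0 : ℂ).re := by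
      rw [← h1]
    rw [Complex.re_sum] at h2
    simpa using h2
  have hYTWT : ∑ t, (S9.cinner (Tensor.slice Φ (projT Φ U V Y) t)
        (Tensor.slice Φ (projT Φ U V W) t)).re
      = - ∑ t, (S9.cinner (Tensor.slice Φ (projTperp Φ U V Y) t)
        (Tensor.slice Φ (projTperp Φ U V W) t)).re := by
    have key : ∀ t, S9.cinner (Tensor.slice Φ Y t) (Tensor.slice Φ W t)
        = S9.cinner (Tensor.slice Φ (projT Φ U V Y) t) (Tensor.slice Φ (projT Φ U V W) t)
          + S9.cinner (Tensor.slice Φ (projTperp Φ U V Y) t)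
              (Tensor.slice Φ (projTperp Φ U V W) t) := by
      intro t
      conv_lhs => rw [hYdec t, hWdec t]
      rw [S9.cinner_add_left, S9.cinner_add_right, S9.cinner_add_right, hcross1 t, hcross2 t]
      ring
    have h3 : ∑ t, (S9.cinner (Tensor.slice Φ (projT Φ U V Y) t)
          (Tensor.slice Φ (projT Φ U V W) t)).re
        + ∑ t, (S9.cinner (Tensor.slice Φ (projTperp Φ U V Y) t)
          (Tensor.slice Φ (projTperp Φ U V W) t)).re = 0 := by
      rw [← Finset.sum_add_distrib, ← hsumYW]
      refine Finset.sum_congr rfl fun t _ => ?_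
      rw [key t, Complex.add_re]
    linarith
  have hslice_cert : ∀ t, Tensor.slice Φ (tprod Φ U (tconj Φ V) - projT Φ U V Y) t
      = Tensor.slice Φ U t * (Tensor.slice Φ V t)ᴴ - Tensor.slice Φ (projT Φ U V Y) t := by
    intro t
    rw [S9.slice_sub, S9.slice_tprod hΦ2, S9.slice_tconj hΦ2]
  have hb1 : ∑ t, (S9.cinner (Tensor.slice Φ U t * (Tensor.slice Φ V t)ᴴ
        - Tensor.slice Φ (projT Φ U V Y) t) (Tensor.slice Φ (projT Φ U V W) t)).re
      ≥ -(c * frob (projT Φ U V W)) := by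
    have heq : ∑ t, (S9.cinner (Tensor.slice Φ U t * (Tensor.slice Φ V t)ᴴ
          - Tensor.slice Φ (projT Φ U V Y) t) (Tensor.slice Φ (projT Φ U V W) t)).re
        = (Tensor.tinner (tprod Φ U (tconj Φ V) - projT Φ U V Y) (projT Φ U V W)).re := by
      rw [S9.tinner_eq_sum_cinner hΦ1, Complex.re_sum]
      refine Finset.sum_congr rfl fun t _ => ?_
      rw [hslice_cert t]
    rw [heq]
    have hcs := S9.abs_re_tinner_le (tprod Φ U (tconj Φ V) - projT Φ U V Y) (projT Φ U V W)
    have hfrob : frob (tprod Φ U (tconj Φ V) - projT Φ U V Y) ≤ c := by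
      rw [S9.frob_sub_comm]
      exact hY1
    have h2 : |(Tensor.tinner (tprod Φ U (tconj Φ V) - projT Φ U V Y)
          (projT Φ U V W)).re| ≤ c * frob (projT Φ U V W) :=
      hcs.trans (mul_le_mul_of_nonneg_right hfrob (S9.frob_nonneg _))
    have := abs_le.mp h2
    linarith [this.1]
  have hb2 : ∑ t, (S9.cinner (Tensor.slice Φ (projTperp Φ U V Y) t)
        (Tensor.slice Φ (projTperp Φ U V W) t)).re
      ≤ (1 / 2) * ∑ t, S9.nuclearNormM' (Tensor.slice Φ (projTperp Φ U V W) t) := by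
    have per : ∀ t, (S9.cinner (Tensor.slice Φ (projTperp Φ U V Y) t)
          (Tensor.slice Φ (projTperp Φ U V W) t)).re
        ≤ (1 / 2) * S9.nuclearNormM' (Tensor.slice Φ (projTperp Φ U V W) t) := by
      intro t
      refine (S9.re_cinner_le_nuclear _ _).trans ?_
      apply mul_le_mul_of_nonneg_right _ (S9.nuclearNormM'_nonneg _)
      have h2 : S9.specNormM' (Tensor.slice Φ (projTperp Φ U V Y) t)
          ≤ specNorm Φ (projTperp Φ U V Y) := by
        rw [← S9.spec_eq]
        exact (le_ciSup (Set.Finite.bddAbove (Set.finite_range _)) t :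
          _ ≤ ⨆ s, Tensor.specNormM (Tensor.slice Φ (projTperp Φ U V Y) s))
      exact h2.trans hY2
    calc ∑ t, (S9.cinner (Tensor.slice Φ (projTperp Φ U V Y) t)
            (Tensor.slice Φ (projTperp Φ U V W) t)).re
        ≤ ∑ t, (1 / 2) * S9.nuclearNormM' (Tensor.slice Φ (projTperp Φ U V W) t) :=
          Finset.sum_le_sum fun t _ => per t
      _ = (1 / 2) * ∑ t, S9.nuclearNormM' (Tensor.slice Φ (projTperp Φ U V W) t) := by
          rw [Finset.mul_sum]
  have hGW : ∀ t, (S9.cinner (Tensor.slice Φ U t * (Tensor.slice Φ V t)ᴴ + B t)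
        (Tensor.slice Φ W t)).re
      = (S9.cinner (Tensor.slice Φ U t * (Tensor.slice Φ V t)ᴴ
          - Tensor.slice Φ (projT Φ U V Y) t) (Tensor.slice Φ (projT Φ U V W) t)).re
        + (S9.cinner (Tensor.slice Φ (projT Φ U V Y) t)
            (Tensor.slice Φ (projT Φ U V W) t)).re
        + S9.nuclearNormM' (Tensor.slice Φ (projTperp Φ U V W) t) := by
    intro t
    have e1 : S9.cinner (Tensor.slice Φ U t * (Tensor.slice Φ V t)ᴴ + B t)
          (Tensor.slice Φ W t)
        = S9.cinner (Tensor.slice Φ U t * (Tensor.slice Φ V t)ᴴ)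
            (Tensor.slice Φ (projT Φ U V W) t)
          + S9.cinner (B t) (Tensor.slice Φ (projTperp Φ U V W) t) := by
      conv_lhs => rw [hWdec t]
      rw [S9.cinner_add_left, S9.cinner_add_right, S9.cinner_add_right, h4a t, h4b t]
      ring
    have e2 : S9.cinner (Tensor.slice Φ U t * (Tensor.slice Φ V t)ᴴ)
          (Tensor.slice Φ (projT Φ U V W) t)
        = S9.cinner (Tensor.slice Φ U t * (Tensor.slice Φ V t)ᴴ
            - Tensor.slice Φ (projT Φ U V Y) t) (Tensor.slice Φ (projT Φ U V W) t)
          + S9.cinner (Tensor.slice Φ (projT Φ U V Y) t)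
              (Tensor.slice Φ (projT Φ U V W) t) := by
      rw [S9.cinner_sub_left]
      ring
    rw [e1, Complex.add_re, e2, Complex.add_re, hB2 t]
  have httnnZW : ttnn Φ (Z + W) = ∑ t, S9.nuclearNormM' (Tensor.slice Φ (Z + W) t) := by
    unfold Tensor.ttnn
    exact Finset.sum_congr rfl fun t _ => S9.nuc_eq _
  have httnnZ : ttnn Φ Z = ∑ t, S9.nuclearNormM' (Tensor.slice Φ Z t) := by
    unfold Tensor.ttnn
    exact Finset.sum_congr rfl fun t _ => S9.nuc_eq _
  have httnnWp : ttnn Φ (projTperp Φ U V W)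
      = ∑ t, S9.nuclearNormM' (Tensor.slice Φ (projTperp Φ U V W) t) := by
    unfold Tensor.ttnn
    exact Finset.sum_congr rfl fun t _ => S9.nuc_eq _
  have hmain : ∑ t, S9.nuclearNormM' (Tensor.slice Φ (Z + W) t)
      ≥ ∑ t, (∑ i, d t i)
        + (∑ t, (S9.cinner (Tensor.slice Φ U t * (Tensor.slice Φ V t)ᴴ
            - Tensor.slice Φ (projT Φ U V Y) t) (Tensor.slice Φ (projT Φ U V W) t)).re
          + ∑ t, (S9.cinner (Tensor.slice Φ (projT Φ U V Y) t)
              (Tensor.slice Φ (projT Φ U V W) t)).re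
          + ∑ t, S9.nuclearNormM' (Tensor.slice Φ (projTperp Φ U V W) t)) := by
    have h1 : ∑ t, S9.nuclearNormM' (Tensor.slice Φ (Z + W) t)
        ≥ ∑ t, (S9.cinner (Tensor.slice Φ U t * (Tensor.slice Φ V t)ᴴ + B t)
            (Tensor.slice Φ (Z + W) t)).re :=
      Finset.sum_le_sum fun t _ => step1 t
    have h2 : ∑ t, (S9.cinner (Tensor.slice Φ U t * (Tensor.slice Φ V t)ᴴ + B t)
          (Tensor.slice Φ (Z + W) t)).re
        = ∑ t, (∑ i, d t i)
          + ∑ t, (S9.cinner (Tensor.slice Φ U t * (Tensor.slice Φ V t)ᴴ + B t)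
              (Tensor.slice Φ W t)).re := by
      rw [← Finset.sum_add_distrib]
      refine Finset.sum_congr rfl fun t _ => ?_
      rw [S9.slice_add, S9.cinner_add_right, Complex.add_re, step2 t]
    have h3 : ∑ t, (S9.cinner (Tensor.slice Φ U t * (Tensor.slice Φ V t)ᴴ + B t)
          (Tensor.slice Φ W t)).re
        = ∑ t, (S9.cinner (Tensor.slice Φ U t * (Tensor.slice Φ V t)ᴴ
            - Tensor.slice Φ (projT Φ U V Y) t) (Tensor.slice Φ (projT Φ U V W) t)).re
          + ∑ t, (S9.cinner (Tensor.slice Φ (projT Φ U V Y) t)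
              (Tensor.slice Φ (projT Φ U V W) t)).re
          + ∑ t, S9.nuclearNormM' (Tensor.slice Φ (projTperp Φ U V W) t) := by
      rw [← Finset.sum_add_distrib, ← Finset.sum_add_distrib]
      exact Finset.sum_congr rfl fun t _ => hGW t
    linarith [h1, h2.symm, h3]
  have hZsum : ttnn Φ Z ≤ ∑ t, (∑ i, d t i) := by
    rw [httnnZ]
    exact Finset.sum_le_sum fun t _ => step3 t
  rw [httnnZW] at *
  rw [httnnWp]
  have hfinal := hmain
  rw [hYTWT] at hfinal
  linarith [hb1, hb2, hZsum, hfinal]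
end
end
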